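/- arXiv:2003.13065 — 5 statements merged into one kernel-verified Lean document; each statement's English description precedes it below -/
import Mathlib

section
/- Let G = (V,E) be a finite simple undirected connected graph whose vertex set is partitioned as V = A ∪ B with B nonempty, such that d_G(v) ≤ d for every v ∈ A (with d ≥ 1), and such that for some real 0 < δ < 1/2 every nonempty subset A' ⊆ A satisfies |∂_G(A')| ≥ δ·|A'|. Let T be any natural number with T ≥ (16·d²/δ²)·(ln|V| + ln(2d/δ)). Then for every v ∈ A, a T-step lazy random walk on G started at v reaches some vertex of B with probability at least δ/(4d); equivalently, 1 − (Q^T·𝟙)_v ≥ δ/(4d), where Q is the substochastic lazy-walk matrix absorbed on B. -/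
open scoped Classical

noncomputable section

set_option linter.unusedSectionVars false
set_option maxHeartbeats 1000000

/-- The edge boundary `∂_G(S)`: the set of edges of `G` with exactly one
endpoint in `S`. -/
def edgeBoundary {V : Type*} (G : SimpleGraph V) (S : Set V) : Set (Sym2 V) :=
  {e | e ∈ G.edgeSet ∧ ∃ u v, e = s(u, v) ∧ u ∈ S ∧ v ∉ S}

/-- The substochastic lazy-random-walk matrix of `G` absorbed on `B`:
`Q u v = 1/2` if `u = v` and `u ∉ B`, `Q u v = 1/(2·deg u)` if `u ∉ B` and
`{u,v} ∈ E`, and `0` otherwise. -/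
def lazyAbsorbed {V : Type*} (G : SimpleGraph V) (B : Set V) : Matrix V V ℝ :=
  fun u v =>
    if u ∈ B then 0
    else if u = v then 1 / 2
    else if G.Adj u v then 1 / (2 * ({w | G.Adj u w}.ncard : ℝ))
    else 0

namespace EscapeAux

open Finset

variable {V : Type*} [Fintype V] [DecidableEq V]

lemma ncard_adj (G : SimpleGraph V) (u : V) :
    {w | G.Adj u w}.ncard = G.degree u := by
  rw [show {w | G.Adj u w} = ↑(G.neighborFinset u) from by ext w; simp,
    Set.ncard_coe_finset]
  rfl

lemma sum_pairs (G : SimpleGraph V) (F : V → V → ℝ) :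
    ∑ p ∈ univ.filter (fun p : V × V => G.Adj p.1 p.2), F p.1 p.2
      = ∑ u, ∑ v ∈ G.neighborFinset u, F u v := by
  rw [Finset.sum_filter, Fintype.sum_prod_type]
  refine Finset.sum_congr rfl fun u _ => ?_
  rw [SimpleGraph.neighborFinset_eq_filter, Finset.sum_filter]

lemma sum_pairs_swap (G : SimpleGraph V) (F : V → V → ℝ) :
    ∑ u, ∑ v ∈ G.neighborFinset u, F u v
      = ∑ u, ∑ v ∈ G.neighborFinset u, F v u := by
  rw [← sum_pairs, ← sum_pairs]
  refine Finset.sum_nbij' (i := Prod.swap) (j := Prod.swap) ?_ ?_ ?_ ?_ ?_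
  · intro p hp; simp only [Finset.mem_filter, Finset.mem_univ, true_and] at hp ⊢
    exact hp.symm
  · intro p hp; simp only [Finset.mem_filter, Finset.mem_univ, true_and] at hp ⊢
    exact hp.symm
  · intro p _; rfl
  · intro p _; rfl
  · intro p _; rfl

lemma card_edgeBoundary (G : SimpleGraph V) (S : Set V) :
    (edgeBoundary G S).ncard
      = (univ.filter (fun p : V × V => G.Adj p.1 p.2 ∧ p.1 ∈ S ∧ p.2 ∉ S)).card := by
  have himg : edgeBoundary G S =
      (fun p : V × V => s(p.1, p.2)) ''
        ↑(univ.filter (fun p : V × V => G.Adj p.1 p.2 ∧ p.1 ∈ S ∧ p.2 ∉ S)) := by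
    ext e
    constructor
    · rintro ⟨he, u, v, rfl, hu, hv⟩
      exact ⟨(u, v), by simp [(G.mem_edgeSet).1 he, hu, hv], rfl⟩
    · rintro ⟨⟨u, v⟩, hp, rfl⟩
      simp only [Finset.coe_filter, Set.mem_setOf_eq, Finset.mem_univ, true_and] at hp
      exact ⟨(G.mem_edgeSet).2 hp.1, u, v, rfl, hp.2.1, hp.2.2⟩
  rw [himg, Set.ncard_image_of_injOn, Set.ncard_coe_finset]
  rintro ⟨u, v⟩ hp ⟨u', v'⟩ hp' he
  simp only [Finset.coe_filter, Set.mem_setOf_eq, Finset.mem_univ, true_and] at hp hp'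
  rw [Sym2.eq_iff] at he
  rcases he with ⟨rfl, rfl⟩ | ⟨rfl, rfl⟩
  · rfl
  · exact absurd hp.2.1 hp'.2.2

lemma card_boundary_swap (G : SimpleGraph V) (s : Finset V) :
    (univ.filter (fun p : V × V => G.Adj p.1 p.2 ∧ p.1 ∉ s ∧ p.2 ∈ s)).card
      = (univ.filter (fun p : V × V => G.Adj p.1 p.2 ∧ p.1 ∈ s ∧ p.2 ∉ s)).card := by
  refine Finset.card_nbij' (i := Prod.swap) (j := Prod.swap) ?_ ?_ ?_ ?_
  · intro p hp; simp only [Finset.mem_coe, Finset.mem_filter, Finset.mem_univ, true_and,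
      Set.mem_setOf_eq, Finset.coe_filter] at hp ⊢
    exact ⟨hp.1.symm, hp.2.2, hp.2.1⟩
  · intro p hp; simp only [Finset.mem_coe, Finset.mem_filter, Finset.mem_univ, true_and,
      Set.mem_setOf_eq, Finset.coe_filter] at hp ⊢
    exact ⟨hp.1.symm, hp.2.2, hp.2.1⟩
  · intro p _; rfl
  · intro p _; rfl

lemma card_edgeBoundary_finset (G : SimpleGraph V) (s : Finset V) :
    (edgeBoundary G ↑s).ncard
      = (univ.filter (fun p : V × V => G.Adj p.1 p.2 ∧ p.1 ∈ s ∧ p.2 ∉ s)).card := by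
  rw [card_edgeBoundary]
  congr 1
  ext p
  simp [Finset.mem_coe]

lemma coarea (G : SimpleGraph V) (A B : Set V) (hunion : A ∪ B = Set.univ)
    (δ : ℝ) (hδ0 : 0 ≤ δ)
    (hexp : ∀ A' ⊆ A, A'.Nonempty →
      δ * (A'.ncard : ℝ) ≤ ((edgeBoundary G A').ncard : ℝ)) :
    ∀ h : V → ℝ, (∀ v, 0 ≤ h v) → (∀ v ∈ B, h v = 0) →
      δ * ∑ v, h v ≤ (1 / 2) * ∑ u, ∑ v ∈ G.neighborFinset u, |h u - h v| := by
  suffices H : ∀ n : ℕ, ∀ h : V → ℝ, (univ.filter fun v => h v ≠ 0).card = n →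
      (∀ v, 0 ≤ h v) → (∀ v ∈ B, h v = 0) →
      δ * ∑ v, h v ≤ (1 / 2) * ∑ u, ∑ v ∈ G.neighborFinset u, |h u - h v| by
    intro h h0 hB; exact H _ h rfl h0 hB
  intro n
  induction n using Nat.strong_induction_on with
  | _ n IH =>
    intro h hcard h0 hBzero
    set s : Finset V := univ.filter fun v => h v ≠ 0 with hs
    have hmem : ∀ v, v ∈ s ↔ h v ≠ 0 := by intro v; simp [hs]
    have hzero : ∀ v, v ∉ s → h v = 0 := by
      intro v hv; by_contra hne; exact hv ((hmem v).2 hne)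
    rcases s.eq_empty_or_nonempty with hse | hsne
    · have : ∀ v, h v = 0 := fun v => hzero v (by simp [hse])
      have h1 : ∑ v, h v = 0 := by simp [this]
      rw [h1, mul_zero]
      have : (0:ℝ) ≤ ∑ u, ∑ v ∈ G.neighborFinset u, |h u - h v| :=
        Finset.sum_nonneg fun u _ => Finset.sum_nonneg fun v _ => abs_nonneg _
      linarith
    · -- minimum value on the support
      obtain ⟨v0, hv0s, hv0min⟩ := s.exists_min_image h hsne
      set m : ℝ := h v0 with hm
      have hm0 : 0 < m := lt_of_le_of_ne (h0 v0) (Ne.symm ((hmem v0).1 hv0s))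
      have hmle : ∀ v ∈ s, m ≤ h v := hv0min
      set h' : V → ℝ := fun v => if v ∈ s then h v - m else 0 with hh'
      have h'0 : ∀ v, 0 ≤ h' v := by
        intro v; by_cases hv : v ∈ s <;> simp [hh', hv]
        exact hmle v hv
      have h'B : ∀ v ∈ B, h' v = 0 := by
        intro v hv
        have : v ∉ s := fun hvs => (hmem v).1 hvs (hBzero v hv)
        simp [hh', this]
      -- support of h' is strictly smaller
      have hsub : (univ.filter fun v => h' v ≠ 0) ⊆ s.erase v0 := by
        intro v hv
        simp only [Finset.mem_filter, Finset.mem_univ, true_and] at hv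
        by_cases hvs : v ∈ s
        · refine Finset.mem_erase.2 ⟨?_, hvs⟩
          rintro rfl
          simp [hh', hvs, hm] at hv
        · simp [hh', hvs] at hv
      have hlt : (univ.filter fun v => h' v ≠ 0).card < n := by
        calc (univ.filter fun v => h' v ≠ 0).card ≤ (s.erase v0).card :=
              Finset.card_le_card hsub
          _ < s.card := Finset.card_erase_lt_of_mem hv0s
          _ = n := hcard
      have IH' := IH _ hlt h' rfl h'0 h'B
      -- decomposition of the vertex sum
      have hsum : ∑ v, h v = (∑ v, h' v) + m * s.card := by
        have : ∀ v, h v = h' v + (if v ∈ s then m else 0) := by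
          intro v; by_cases hv : v ∈ s
          · simp [hh', hv]
          · simp [hh', hv, hzero v hv]
        rw [Finset.sum_congr rfl fun v _ => this v, Finset.sum_add_distrib]
        congr 1
        rw [Finset.sum_ite_mem, Finset.univ_inter, Finset.sum_const, nsmul_eq_mul, mul_comm]
      -- decomposition of each edge term
      have hedge : ∀ u v : V, |h u - h v|
          = |h' u - h' v| + ((if u ∈ s ∧ v ∉ s then m else 0) + (if u ∉ s ∧ v ∈ s then m else 0)) := by
        intro u v
        by_cases hu : u ∈ s <;> by_cases hv : v ∈ s
        · have e1 : h' u - h' v = h u - h v := by simp only [hh', hu, hv, if_true]; ring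
          simp [hu, hv, e1]
        · have hv0' : h v = 0 := hzero v hv
          have : |h u - h v| = h u := by rw [hv0', sub_zero, abs_of_nonneg (h0 u)]
          have h'u : h' u = h u - m := by simp [hh', hu]
          have h'v : h' v = 0 := by simp [hh', hv]
          rw [this, h'u, h'v, sub_zero, abs_of_nonneg (by linarith [hmle u hu])]
          simp [hu, hv]
        · have hu0' : h u = 0 := hzero u hu
          have : |h u - h v| = h v := by
            rw [hu0', zero_sub, abs_neg, abs_of_nonneg (h0 v)]
          have h'v : h' v = h v - m := by simp [hh', hv]
          have h'u : h' u = 0 := by simp [hh', hu]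
          rw [this, h'u, h'v, zero_sub, abs_neg, abs_of_nonneg (by linarith [hmle v hv])]
          simp [hu, hv]
        · simp [hh', hu, hv, hzero u hu, hzero v hv]
      set P1 : Finset (V × V) :=
        univ.filter (fun p : V × V => G.Adj p.1 p.2 ∧ p.1 ∈ s ∧ p.2 ∉ s) with hP1
      set P2 : Finset (V × V) :=
        univ.filter (fun p : V × V => G.Adj p.1 p.2 ∧ p.1 ∉ s ∧ p.2 ∈ s) with hP2
      have hcard12 : P2.card = P1.card := card_boundary_swap G s
      have hboundary : δ * (s.card : ℝ) ≤ (P1.card : ℝ) := by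
        have hsubA : (↑s : Set V) ⊆ A := by
          intro u hu
          have hus : u ∈ s := hu
          have hnB : u ∉ B := fun huB => (hmem u).1 hus (hBzero u huB)
          have huniv : u ∈ A ∪ B := by rw [hunion]; exact Set.mem_univ u
          rcases huniv with hA | hB
          · exact hA
          · exact absurd hB hnB
        have hne : (↑s : Set V).Nonempty := ⟨v0, hv0s⟩
        have := hexp ↑s hsubA hne
        rwa [Set.ncard_coe_finset, card_edgeBoundary_finset] at this
      have hsum1 : ∑ u, ∑ v ∈ G.neighborFinset u, (if u ∈ s ∧ v ∉ s then m else 0)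
          = m * P1.card := by
        rw [← sum_pairs, ← Finset.sum_filter, Finset.filter_filter, Finset.sum_const,
          nsmul_eq_mul, mul_comm]
      have hsum2 : ∑ u, ∑ v ∈ G.neighborFinset u, (if u ∉ s ∧ v ∈ s then m else 0)
          = m * P2.card := by
        rw [← sum_pairs, ← Finset.sum_filter, Finset.filter_filter, Finset.sum_const,
          nsmul_eq_mul, mul_comm]
      have expand : ∑ u, ∑ v ∈ G.neighborFinset u, |h u - h v|
          = (∑ u, ∑ v ∈ G.neighborFinset u, |h' u - h' v|)
            + ((∑ u, ∑ v ∈ G.neighborFinset u, (if u ∈ s ∧ v ∉ s then m else 0))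
               + (∑ u, ∑ v ∈ G.neighborFinset u, (if u ∉ s ∧ v ∈ s then m else 0))) := by
        rw [← Finset.sum_add_distrib, ← Finset.sum_add_distrib]
        refine Finset.sum_congr rfl fun u _ => ?_
        rw [← Finset.sum_add_distrib, ← Finset.sum_add_distrib]
        exact Finset.sum_congr rfl fun v _ => hedge u v
      have key : δ * (m * s.card) ≤ m * P1.card := by
        calc δ * (m * s.card) = m * (δ * s.card) := by ring
          _ ≤ m * P1.card := mul_le_mul_of_nonneg_left hboundary hm0.le
      rw [expand, hsum1, hsum2, hsum]
      have hPc : (P2.card : ℝ) = (P1.card : ℝ) := by rw [hcard12]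
      nlinarith [IH', key, hPc]

lemma mulVec_lazy (G : SimpleGraph V) (B : Set V) (x : V → ℝ) (u : V) :
    (lazyAbsorbed G B).mulVec x u =
      if u ∈ B then 0
      else x u / 2 + (∑ v ∈ G.neighborFinset u, x v) / (2 * (G.degree u : ℝ)) := by
  by_cases hu : u ∈ B
  · simp only [hu, if_true]
    have : ∀ v, lazyAbsorbed G B u v = 0 := by intro v; unfold lazyAbsorbed; simp [hu]
    unfold Matrix.mulVec dotProduct
    exact Finset.sum_eq_zero fun v _ => by show lazyAbsorbed G B u v * x v = 0; rw [this v, zero_mul]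
  · simp only [hu, if_false]
    have hterm : ∀ v, lazyAbsorbed G B u v * x v
        = (if u = v then x v / 2 else 0)
          + (if G.Adj u v then x v / (2 * (G.degree u : ℝ)) else 0) := by
      intro v
      unfold lazyAbsorbed
      by_cases huv : u = v
      · subst huv; simp [hu, G.irrefl]
        ring
      · by_cases hadj : G.Adj u v
        · simp [hu, huv, hadj, ncard_adj]
          ring
        · simp [hu, huv, hadj]
    show ∑ v, lazyAbsorbed G B u v * x v = _
    refine Eq.trans (Finset.sum_congr rfl fun v _ => hterm v) ?_
    rw [Finset.sum_add_distrib]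
    congr 1
    · rw [Finset.sum_ite_eq]
      simp
    · rw [SimpleGraph.neighborFinset_eq_filter, Finset.sum_filter, Finset.sum_div]
      refine Finset.sum_congr rfl fun v _ => ?_
      split <;> simp

lemma spectral (G : SimpleGraph V) (A B : Set V) (hunion : A ∪ B = Set.univ)
    (d : ℕ) (hd : 1 ≤ d)
    (hdeg : ∀ v ∈ A, G.degree v ≤ d)
    (hdegpos : ∀ v : V, 0 < G.degree v)
    (δ : ℝ) (hδ0 : 0 < δ)
    (hexp : ∀ A' ⊆ A, A'.Nonempty →
      δ * (A'.ncard : ℝ) ≤ ((edgeBoundary G A').ncard : ℝ))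
    (g : V → ℝ) (hg0 : ∀ v, 0 ≤ g v) (hgB : ∀ v ∈ B, g v = 0) :
    ∑ u, (G.degree u : ℝ) * ((lazyAbsorbed G B).mulVec g u) ^ 2
      ≤ (1 - δ ^ 2 / (4 * (d : ℝ) ^ 2)) * ∑ u, (G.degree u : ℝ) * g u ^ 2 := by
  have hD0 : ∀ u : V, (0:ℝ) < (G.degree u : ℝ) := fun u => by exact_mod_cast hdegpos u
  set S : V → ℝ := fun u => ∑ v ∈ G.neighborFinset u, g v with hS
  set q : V → ℝ := (lazyAbsorbed G B).mulVec g with hq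
  set w : V → ℝ := fun u => if u ∈ B then 0 else S u / (G.degree u : ℝ) with hw
  have hqf : ∀ u, q u = (g u + w u) / 2 := by
    intro u
    rw [hq, mulVec_lazy]
    by_cases hu : u ∈ B
    · simp [hu, hw, hgB u hu]
    · simp only [hu, if_false, hw]
      have := (hD0 u).ne'
      field_simp
      ring
  set N2 : ℝ := ∑ u, (G.degree u : ℝ) * g u ^ 2 with hN2
  set T2 : ℝ := ∑ v, g v ^ 2 with hT2
  set E2 : ℝ := ∑ u, ∑ v ∈ G.neighborFinset u, g u * g v with hE2
  set Dq : ℝ := ∑ u, ∑ v ∈ G.neighborFinset u, (g u - g v) ^ 2 with hDq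
  have hNg : ∀ u, ∑ v ∈ G.neighborFinset u, g u ^ 2 = (G.degree u : ℝ) * g u ^ 2 := by
    intro u
    rw [Finset.sum_const, nsmul_eq_mul]
    rfl
  have fact1 : ∑ u, ∑ v ∈ G.neighborFinset u, g u ^ 2 = N2 :=
    Finset.sum_congr rfl fun u _ => hNg u
  have fact2 : ∑ u, ∑ v ∈ G.neighborFinset u, g v ^ 2 = N2 := by
    rw [← sum_pairs_swap]; exact fact1
  have hDqE : Dq + 2 * E2 = N2 + N2 := by
    have : ∀ u, (∑ v ∈ G.neighborFinset u, (g u - g v) ^ 2)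
        + 2 * ∑ v ∈ G.neighborFinset u, g u * g v
        = (∑ v ∈ G.neighborFinset u, g u ^ 2) + ∑ v ∈ G.neighborFinset u, g v ^ 2 := by
      intro u
      rw [Finset.mul_sum, ← Finset.sum_add_distrib, ← Finset.sum_add_distrib]
      exact Finset.sum_congr rfl fun v _ => by ring
    calc Dq + 2 * E2
        = ∑ u, ((∑ v ∈ G.neighborFinset u, (g u - g v) ^ 2)
            + 2 * ∑ v ∈ G.neighborFinset u, g u * g v) := by
          rw [Finset.sum_add_distrib, hDq, hE2, Finset.mul_sum]
      _ = ∑ u, ((∑ v ∈ G.neighborFinset u, g u ^ 2) + ∑ v ∈ G.neighborFinset u, g v ^ 2) :=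
          Finset.sum_congr rfl fun u _ => this u
      _ = N2 + N2 := by rw [Finset.sum_add_distrib, fact1, fact2]
  have hDq0 : 0 ≤ Dq :=
    Finset.sum_nonneg fun u _ => Finset.sum_nonneg fun v _ => sq_nonneg _
  have hE2N : E2 ≤ N2 := by linarith
  -- claim2
  have claim2 : ∑ u, (G.degree u : ℝ) * g u * w u = E2 := by
    rw [hE2]
    refine Finset.sum_congr rfl fun u _ => ?_
    have inner : ∑ v ∈ G.neighborFinset u, g u * g v = g u * S u := by
      rw [hS, Finset.mul_sum]
    rw [inner]
    by_cases hu : u ∈ B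
    · simp [hw, hu, hgB u hu]
    · simp only [hw, hu, if_false]
      have hne : (G.degree u : ℝ) ≠ 0 := (hD0 u).ne'
      field_simp
  -- claim1
  have claim1 : ∑ u, (G.degree u : ℝ) * w u ^ 2 ≤ N2 := by
    rw [← fact2]
    refine Finset.sum_le_sum fun u _ => ?_
    by_cases hu : u ∈ B
    · simp only [hw, hu, if_true]
      have : (0:ℝ) ≤ ∑ v ∈ G.neighborFinset u, g v ^ 2 :=
        Finset.sum_nonneg fun v _ => sq_nonneg _
      simpa using this
    · simp only [hw, hu, if_false]
      have hcard : S u ^ 2 ≤ (G.degree u : ℝ) * ∑ v ∈ G.neighborFinset u, g v ^ 2 := by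
        have := sq_sum_le_card_mul_sum_sq (s := G.neighborFinset u) (f := g)
        exact_mod_cast this
      have hDpos := hD0 u
      rw [div_pow]
      rw [div_eq_mul_inv, mul_comm ((G.degree u : ℝ))]
      rw [mul_assoc]
      have : ((G.degree u : ℝ) ^ 2)⁻¹ * (G.degree u : ℝ) = ((G.degree u : ℝ))⁻¹ := by
        field_simp
      rw [this, ← div_eq_mul_inv]
      rw [div_le_iff₀ hDpos]
      calc S u ^ 2 ≤ (G.degree u : ℝ) * ∑ v ∈ G.neighborFinset u, g v ^ 2 := hcard
        _ = (∑ v ∈ G.neighborFinset u, g v ^ 2) * (G.degree u : ℝ) := by ring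
  -- bound on sum D q^2
  have hqq : ∑ u, (G.degree u : ℝ) * q u ^ 2 ≤ (N2 + E2) / 2 := by
    have expand : ∑ u, (G.degree u : ℝ) * q u ^ 2
        = (∑ u, ((G.degree u : ℝ) * g u ^ 2 + 2 * ((G.degree u : ℝ) * g u * w u)
            + (G.degree u : ℝ) * w u ^ 2)) / 4 := by
      rw [Finset.sum_div]
      refine Finset.sum_congr rfl fun u _ => ?_
      rw [hqf u]; ring
    rw [expand, Finset.sum_add_distrib, Finset.sum_add_distrib, ← Finset.mul_sum, claim2]
    have h1 := claim1
    have h2 : ∑ u, (G.degree u : ℝ) * g u ^ 2 = N2 := hN2.symm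
    linarith
  -- Cheeger part
  set P : Finset (V × V) := univ.filter (fun p : V × V => G.Adj p.1 p.2) with hP
  set Sabs : ℝ := ∑ u, ∑ v ∈ G.neighborFinset u, |g u ^ 2 - g v ^ 2| with hSabs
  have habs_ge : 2 * (δ * T2) ≤ Sabs := by
    have h : δ * ∑ v, g v ^ 2
        ≤ (1 / 2) * ∑ u, ∑ v ∈ G.neighborFinset u, |g u ^ 2 - g v ^ 2| :=
      coarea G A B hunion δ hδ0.le hexp (fun v => g v ^ 2)
        (fun v => sq_nonneg _) (fun v hv => by show g v ^ 2 = 0; rw [hgB v hv]; ring)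
    rw [hT2, hSabs]
    linarith
  set SP : ℝ := ∑ u, ∑ v ∈ G.neighborFinset u, (g u + g v) ^ 2 with hSP
  have hSPval : SP = 2 * N2 + 2 * E2 := by
    have : ∀ u, ∑ v ∈ G.neighborFinset u, (g u + g v) ^ 2
        = (∑ v ∈ G.neighborFinset u, g u ^ 2) + (∑ v ∈ G.neighborFinset u, g v ^ 2)
          + 2 * ∑ v ∈ G.neighborFinset u, g u * g v := by
      intro u
      rw [Finset.mul_sum, ← Finset.sum_add_distrib, ← Finset.sum_add_distrib]
      exact Finset.sum_congr rfl fun v _ => by ring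
    calc SP = ∑ u, ((∑ v ∈ G.neighborFinset u, g u ^ 2)
          + (∑ v ∈ G.neighborFinset u, g v ^ 2)
          + 2 * ∑ v ∈ G.neighborFinset u, g u * g v) :=
        Finset.sum_congr rfl fun u _ => this u
      _ = 2 * N2 + 2 * E2 := by
        rw [Finset.sum_add_distrib, Finset.sum_add_distrib, fact1, fact2, ← Finset.mul_sum,
          ← hE2]
        ring
  have hCS : Sabs ^ 2 ≤ Dq * SP := by
    have habs : ∀ a b : ℝ, 0 ≤ a → 0 ≤ b → |a ^ 2 - b ^ 2| = |a - b| * (a + b) := by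
      intro a b ha hb
      have : a ^ 2 - b ^ 2 = (a - b) * (a + b) := by ring
      rw [this, abs_mul, abs_of_nonneg (by linarith : (0:ℝ) ≤ a + b)]
    have e1 : Sabs = ∑ p ∈ P, |g p.1 - g p.2| * (g p.1 + g p.2) := by
      rw [hSabs, ← sum_pairs]
      exact Finset.sum_congr rfl fun p _ => (habs _ _ (hg0 _) (hg0 _))
    have e2 : Dq = ∑ p ∈ P, |g p.1 - g p.2| ^ 2 := by
      rw [hDq, ← sum_pairs]
      exact Finset.sum_congr rfl fun p _ => (sq_abs _).symm
    have e3 : SP = ∑ p ∈ P, (g p.1 + g p.2) ^ 2 := by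
      rw [hSP, ← sum_pairs]
    rw [e1, e2, e3]
    exact Finset.sum_mul_sq_le_sq_mul_sq P _ _
  have hT2N : N2 ≤ (d : ℝ) * T2 := by
    rw [hN2, hT2, Finset.mul_sum]
    refine Finset.sum_le_sum fun u _ => ?_
    by_cases hgu : g u = 0
    · simp [hgu]
    · have huB : u ∉ B := fun hu => hgu (hgB u hu)
      have huA : u ∈ A := by
        have : u ∈ A ∪ B := by rw [hunion]; exact Set.mem_univ u
        rcases this with h | h
        · exact h
        · exact absurd h huB
      have : (G.degree u : ℝ) ≤ (d : ℝ) := by exact_mod_cast hdeg u huA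
      exact mul_le_mul_of_nonneg_right this (sq_nonneg _)
  have hT2leN : T2 ≤ N2 := by
    rw [hN2, hT2]
    refine Finset.sum_le_sum fun u _ => ?_
    have : (1:ℝ) ≤ (G.degree u : ℝ) := by exact_mod_cast hdegpos u
    nlinarith [sq_nonneg (g u)]
  have hN2nonneg : 0 ≤ N2 := by
    rw [hN2]
    exact Finset.sum_nonneg fun u _ => mul_nonneg (hD0 u).le (sq_nonneg _)
  by_cases hN2z : N2 = 0
  · -- g ≡ 0 case
    have hg : ∀ u, g u = 0 := by
      intro u
      have hall := (Finset.sum_eq_zero_iff_of_nonneg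
        (fun u _ => mul_nonneg (hD0 u).le (sq_nonneg (g u)))).1 hN2z u (Finset.mem_univ u)
      have := (hD0 u).ne'
      have : g u ^ 2 = 0 := by
        rcases mul_eq_zero.1 hall with h | h
        · exact absurd h this
        · exact h
      exact pow_eq_zero_iff (by norm_num) |>.1 this
    have hqz : ∀ u, q u = 0 := by
      intro u
      rw [hqf u]
      have hSu : S u = 0 := Finset.sum_eq_zero fun v _ => hg v
      have hwu : w u = 0 := by
        rw [hw]; by_cases hu : u ∈ B <;> simp [hu, hSu]
      rw [hg u, hwu]; ring
    have : ∑ u, (G.degree u : ℝ) * q u ^ 2 = 0 :=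
      Finset.sum_eq_zero fun u _ => by rw [hqz u]; ring
    rw [this, hN2z]
    simp
  · have hN2pos : 0 < N2 := lt_of_le_of_ne hN2nonneg (Ne.symm hN2z)
    have hdR : (1:ℝ) ≤ (d:ℝ) := by exact_mod_cast hd
    have hT2pos : 0 < T2 := by nlinarith
    have hSabs0 : 0 ≤ Sabs :=
      Finset.sum_nonneg fun u _ => Finset.sum_nonneg fun v _ => abs_nonneg _
    have h2δ : 0 ≤ 2 * (δ * T2) := by positivity
    have hsq1 : (2 * (δ * T2)) ^ 2 ≤ Sabs ^ 2 := by nlinarith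
    have hSP4 : SP ≤ 4 * N2 := by rw [hSPval]; linarith
    have h3 : Dq * SP ≤ Dq * (4 * N2) := mul_le_mul_of_nonneg_left hSP4 hDq0
    have h4 : δ ^ 2 * T2 ^ 2 ≤ Dq * N2 := by nlinarith
    have h5 : δ ^ 2 * N2 ^ 2 ≤ δ ^ 2 * ((d:ℝ) * T2) ^ 2 :=
      mul_le_mul_of_nonneg_left (pow_le_pow_left₀ hN2nonneg hT2N 2) (sq_nonneg δ)
    have h6' := mul_le_mul_of_nonneg_left h4 (sq_nonneg (d:ℝ))
    have h6 : δ ^ 2 * N2 * N2 ≤ ((d:ℝ) ^ 2 * Dq) * N2 := by nlinarith [h5, h6']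
    have hkey : δ ^ 2 * N2 ≤ (d:ℝ) ^ 2 * Dq := le_of_mul_le_mul_right h6 hN2pos
    have hfin : δ ^ 2 / (4 * (d:ℝ) ^ 2) * N2 ≤ Dq / 4 := by
      rw [div_mul_eq_mul_div, div_le_div_iff₀ (by positivity) (by norm_num)]
      nlinarith
    have hE2' : E2 = N2 - Dq / 2 := by linarith
    calc ∑ u, (G.degree u : ℝ) * q u ^ 2 ≤ (N2 + E2) / 2 := hqq
      _ = N2 - Dq / 4 := by rw [hE2']; ring
      _ ≤ N2 - δ ^ 2 / (4 * (d:ℝ) ^ 2) * N2 := by linarith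
      _ = (1 - δ ^ 2 / (4 * (d:ℝ) ^ 2)) * N2 := by ring

end EscapeAux

/-- Escaping time of a high-conductance subset: in a finite simple connected
graph `G` with vertex set partitioned as `A ∪ B` (`B` nonempty), where every
vertex of `A` has degree at most `d ≥ 1` and every nonempty `A' ⊆ A` satisfies
`|∂_G(A')| ≥ δ|A'|` for some `0 < δ < 1/2`, a `T`-step lazy random walk with
`T ≥ (16 d²/δ²)(ln |V| + ln (2d/δ))` started at any `v ∈ A` reaches `B` with
probability at least `δ/(4d)`. -/
theorem escaping_time_of_high_conductance
    {V : Type*} [Fintype V] [DecidableEq V]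
    (G : SimpleGraph V) (hconn : G.Connected)
    (A B : Set V) (hunion : A ∪ B = Set.univ) (hdisj : Disjoint A B)
    (hB : B.Nonempty)
    (d : ℕ) (hd : 1 ≤ d)
    (hdeg : ∀ v ∈ A, {w | G.Adj v w}.ncard ≤ d)
    (δ : ℝ) (hδ0 : 0 < δ) (hδhalf : δ < 1 / 2)
    (hexp : ∀ A' ⊆ A, A'.Nonempty →
      δ * (A'.ncard : ℝ) ≤ ((edgeBoundary G A').ncard : ℝ))
    (T : ℕ)
    (hT : (16 * (d : ℝ) ^ 2 / δ ^ 2) *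
        (Real.log (Fintype.card V) + Real.log (2 * d / δ)) ≤ (T : ℝ)) :
    ∀ v ∈ A,
      δ / (4 * d) ≤ 1 - ((lazyAbsorbed G B ^ T).mulVec (fun _ => (1 : ℝ))) v := by
  intro v hv
  classical
  have hvB : v ∉ B := fun h => Set.disjoint_left.1 hdisj hv h
  obtain ⟨b, hb⟩ := hB
  have hvb : v ≠ b := fun h => hvB (h ▸ hb)
  have hnontriv : Nontrivial V := ⟨⟨v, b, hvb⟩⟩
  have hn2 : 2 ≤ Fintype.card V := Fintype.one_lt_card_iff_nontrivial.2 hnontriv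
  -- degrees are positive
  have hdegpos : ∀ u : V, 0 < G.degree u := by
    intro u
    obtain ⟨u', hu'⟩ := exists_ne u
    obtain ⟨p⟩ := hconn u u'
    rw [G.degree_pos_iff_exists_adj]
    cases p with
    | nil => exact absurd rfl hu'.symm
    | cons h _ => exact ⟨_, h⟩
  have hdeg' : ∀ u ∈ A, G.degree u ≤ d := fun u hu => by
    have := hdeg u hu; rwa [EscapeAux.ncard_adj] at this
  set dR : ℝ := (d : ℝ) with hdR
  have hdR1 : (1:ℝ) ≤ dR := by rw [hdR]; exact_mod_cast hd
  set nR : ℝ := (Fintype.card V : ℝ) with hnR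
  have hnR2 : (2:ℝ) ≤ nR := by rw [hnR]; exact_mod_cast hn2
  set c : ℝ := δ ^ 2 / (4 * dR ^ 2) with hc
  have hc0 : 0 < c := by positivity
  have hc16 : c ≤ 1 / 16 := by
    rw [hc]
    have h1 : δ ^ 2 ≤ 1 / 4 := by nlinarith
    have h2 : (4:ℝ) ≤ 4 * dR ^ 2 := by nlinarith
    calc δ ^ 2 / (4 * dR ^ 2) ≤ (1/4) / 4 := by
          apply div_le_div₀ (by norm_num) h1 (by norm_num) h2
      _ = 1 / 16 := by norm_num
  -- logs
  have hlogd : 0 ≤ Real.log dR := Real.log_nonneg hdR1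
  have hlogn : 0 ≤ Real.log nR := Real.log_nonneg (by linarith)
  have hlog2 : 0 < Real.log 2 := Real.log_pos (by norm_num)
  have hδne : δ ≠ 0 := hδ0.ne'
  have hdRne : dR ≠ 0 := by linarith
  have hnRne : nR ≠ 0 := by linarith
  have hlogdelta : Real.log δ ≤ -Real.log 2 := by
    have : Real.log δ ≤ Real.log (1/2) := Real.log_le_log hδ0 (by linarith)
    rwa [show (1:ℝ)/2 = (2:ℝ)⁻¹ by norm_num, Real.log_inv] at this
  have hsplit : Real.log (2 * dR / δ) = Real.log 2 + Real.log dR - Real.log δ := by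
    rw [Real.log_div (by positivity) hδne, Real.log_mul (by norm_num) hdRne]
  have hlog2dn : Real.log (2 * dR * nR) = Real.log 2 + Real.log dR + Real.log nR := by
    rw [Real.log_mul (by positivity) hnRne, Real.log_mul (by norm_num) hdRne]
  set L : ℝ := Real.log nR + Real.log (2 * dR / δ) with hL
  have hLpos : 0 < L := by
    rw [hL, hsplit]; linarith
  -- T ≥ 1
  have hTR : (16 * dR ^ 2 / δ ^ 2) * L ≤ (T : ℝ) := hT
  have hTpos : 0 < T := by
    have h16 : (0:ℝ) < 16 * dR ^ 2 / δ ^ 2 := by positivity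
    have : (0:ℝ) < (T:ℝ) := lt_of_lt_of_le (by positivity) hTR
    exact_mod_cast this
  obtain ⟨T', rfl⟩ : ∃ T', T = T' + 1 := ⟨T - 1, (Nat.succ_pred_eq_of_pos hTpos).symm⟩
  -- c * T ≥ 4 L
  have hid : c * (16 * dR ^ 2 / δ ^ 2) = 4 := by
    rw [hc]; field_simp; ring
  have hcT : 4 * L ≤ c * ((T' + 1 : ℕ) : ℝ) := by
    calc 4 * L = (c * (16 * dR ^ 2 / δ ^ 2)) * L := by rw [hid]
      _ = c * ((16 * dR ^ 2 / δ ^ 2) * L) := by ring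
      _ ≤ c * ((T' + 1 : ℕ) : ℝ) := mul_le_mul_of_nonneg_left hTR hc0.le
  have hcT' : Real.log (2 * dR * nR) ≤ c * (T' : ℝ) := by
    have hcast : ((T' + 1 : ℕ) : ℝ) = (T' : ℝ) + 1 := by push_cast; ring
    rw [hcast] at hcT
    rw [hlog2dn]
    have h4L : 4 * L = 4 * Real.log nR + 4 * (Real.log 2 + Real.log dR - Real.log δ) := by
      rw [hL, hsplit]; ring
    have hld : -Real.log δ ≥ Real.log 2 := by linarith
    have hlog2' : 0.6931471803 < Real.log 2 := Real.log_two_gt_d9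
    linarith [hlogd, hlogn, hc16, hcT, h4L, hld, hlog2']
  -- the walk vector
  set Q : Matrix V V ℝ := lazyAbsorbed G B with hQ
  set oneA : V → ℝ := fun u => if u ∈ B then 0 else 1 with honeA
  have hQ1 : Q.mulVec (fun _ => (1:ℝ)) = oneA := by
    funext u
    rw [hQ, EscapeAux.mulVec_lazy]
    by_cases hu : u ∈ B
    · simp [hu, honeA]
    · simp only [hu, if_false, honeA]
      have hdu : (0:ℝ) < (G.degree u : ℝ) := by exact_mod_cast hdegpos u
      rw [Finset.sum_const, nsmul_eq_mul, mul_one]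
      have hcard : ((G.neighborFinset u).card : ℝ) = (G.degree u : ℝ) := rfl
      rw [hcard]
      field_simp
      ring
  set ψ : ℕ → V → ℝ := fun t => (Q ^ t).mulVec oneA with hψ
  have hψsucc : ∀ t, ψ (t + 1) = Q.mulVec (ψ t) := by
    intro t
    rw [hψ]
    show (Q ^ (t+1)).mulVec oneA = Q.mulVec ((Q ^ t).mulVec oneA)
    rw [pow_succ', Matrix.mulVec_mulVec]
  have hmain : (Q ^ (T' + 1)).mulVec (fun _ => (1:ℝ)) = ψ T' := by
    rw [pow_succ, ← Matrix.mulVec_mulVec, hQ1]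
  have hψprops : ∀ t, (∀ u, 0 ≤ ψ t u) ∧ (∀ u ∈ B, ψ t u = 0) := by
    intro t
    induction t with
    | zero =>
      constructor
      · intro u
        show ((Q ^ 0).mulVec oneA) u ≥ 0
        rw [pow_zero, Matrix.one_mulVec]
        rw [honeA]
        by_cases hu : u ∈ B <;> simp [hu]
      · intro u hu
        show ((Q ^ 0).mulVec oneA) u = 0
        rw [pow_zero, Matrix.one_mulVec]
        simp [honeA, hu]
    | succ t ih =>
      rw [hψsucc t]
      constructor
      · intro u
        rw [hQ, EscapeAux.mulVec_lazy]
        by_cases hu : u ∈ B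
        · simp [hu]
        · simp only [hu, if_false]
          have h1 : 0 ≤ ψ t u / 2 := by linarith [ih.1 u]
          have h2 : 0 ≤ (∑ w ∈ G.neighborFinset u, ψ t w) / (2 * (G.degree u : ℝ)) := by
            apply div_nonneg (Finset.sum_nonneg fun w _ => ih.1 w) (by positivity)
          linarith
      · intro u hu
        rw [hQ, EscapeAux.mulVec_lazy]
        simp [hu]
  -- potential function
  set Φ : ℕ → ℝ := fun t => ∑ u, (G.degree u : ℝ) * (ψ t u) ^ 2 with hΦ
  have hΦstep : ∀ t, Φ (t + 1) ≤ (1 - c) * Φ t := by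
    intro t
    have hspec := EscapeAux.spectral G A B hunion d hd hdeg' hdegpos δ hδ0 hexp (ψ t)
      (hψprops t).1 (hψprops t).2
    rw [hΦ]
    simp only []
    rw [hψsucc t, hQ, hc]
    exact hspec
  have hΦnonneg : ∀ t, 0 ≤ Φ t := by
    intro t
    exact Finset.sum_nonneg fun u _ => mul_nonneg (by positivity) (sq_nonneg _)
  have hc1 : 0 ≤ 1 - c := by linarith
  have hΦTall : ∀ t : ℕ, Φ t ≤ (1 - c) ^ t * Φ 0 := by
    intro t
    induction t with
    | zero => simp
    | succ t ih =>
      calc Φ (t + 1) ≤ (1 - c) * Φ t := hΦstep t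
        _ ≤ (1 - c) * ((1 - c) ^ t * Φ 0) := mul_le_mul_of_nonneg_left ih hc1
        _ = (1 - c) ^ (t + 1) * Φ 0 := by ring
  have hΦT : Φ T' ≤ (1 - c) ^ T' * Φ 0 := hΦTall T' 
  have hΦ0 : Φ 0 ≤ dR * nR := by
    rw [hΦ]
    calc ∑ u, (G.degree u : ℝ) * (ψ 0 u) ^ 2 ≤ ∑ _u : V, dR := by
          refine Finset.sum_le_sum fun u _ => ?_
          show (G.degree u : ℝ) * (((Q ^ 0).mulVec oneA) u) ^ 2 ≤ dR
          rw [pow_zero, Matrix.one_mulVec]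
          by_cases hu : u ∈ B
          · simp only [honeA, hu, if_true]
            nlinarith
          · have huA : u ∈ A := by
              have : u ∈ A ∪ B := by rw [hunion]; exact Set.mem_univ u
              rcases this with h | h
              · exact h
              · exact absurd h hu
            have : (G.degree u : ℝ) ≤ dR := by rw [hdR]; exact_mod_cast hdeg' u huA
            simp only [honeA, hu, if_false]
            nlinarith
      _ = dR * nR := by
          rw [Finset.sum_const, nsmul_eq_mul, Finset.card_univ, hnR]
          ring
  -- pointwise bound at v
  have hdv1 : (1:ℝ) ≤ (G.degree v : ℝ) := by exact_mod_cast hdegpos v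
  have hpoint : (ψ T' v) ^ 2 ≤ Φ T' := by
    have hterm : (ψ T' v) ^ 2 ≤ (G.degree v : ℝ) * (ψ T' v) ^ 2 := by nlinarith [sq_nonneg (ψ T' v)]
    have hsingle : (G.degree v : ℝ) * (ψ T' v) ^ 2 ≤ Φ T' := by
      rw [hΦ]
      exact Finset.single_le_sum (f := fun u => (G.degree u : ℝ) * (ψ T' u) ^ 2)
        (fun u _ => mul_nonneg (by positivity) (sq_nonneg _)) (Finset.mem_univ v)
    linarith
  -- numeric chain
  have hexpc : (1 - c) ^ T' ≤ Real.exp (-(c * T')) := by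
    have h1 : (1 - c) ≤ Real.exp (-c) := by
      have := Real.add_one_le_exp (-c); linarith
    calc (1 - c) ^ T' ≤ (Real.exp (-c)) ^ T' := pow_le_pow_left₀ hc1 h1 T'
      _ = Real.exp ((T' : ℝ) * (-c)) := by rw [← Real.exp_nat_mul]
      _ = Real.exp (-(c * T')) := by congr 1; ring
  have h2dn : (0:ℝ) < 2 * dR * nR := by positivity
  have hexp1 : 2 * dR * nR ≤ Real.exp (c * T') := by
    rw [← Real.exp_log h2dn]
    exact Real.exp_le_exp.2 hcT'
  have hexp2 : Real.exp (-(c * T')) ≤ 1 / (2 * dR * nR) := by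
    rw [Real.exp_neg]
    rw [one_div]
    exact inv_anti₀ h2dn hexp1
  have hψv2 : (ψ T' v) ^ 2 ≤ 1 / 2 := by
    have hchain : (ψ T' v) ^ 2 ≤ (1 - c) ^ T' * (dR * nR) := by
      calc (ψ T' v) ^ 2 ≤ Φ T' := hpoint
        _ ≤ (1 - c) ^ T' * Φ 0 := hΦT
        _ ≤ (1 - c) ^ T' * (dR * nR) :=
            mul_le_mul_of_nonneg_left hΦ0 (pow_nonneg hc1 T')
    have h2 : (1 - c) ^ T' * (dR * nR) ≤ (1 / (2 * dR * nR)) * (dR * nR) := by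
      apply mul_le_mul_of_nonneg_right _ (by positivity)
      exact le_trans hexpc hexp2
    have h3 : (1 / (2 * dR * nR)) * (dR * nR) = 1 / 2 := by
      field_simp
    linarith
  -- conclude
  have hδ4d : δ / (4 * dR) ≤ 1 / 8 := by
    calc δ / (4 * dR) ≤ (1/2) / 4 := by
          apply div_le_div₀ (by norm_num) (by linarith) (by norm_num) (by linarith)
      _ = 1 / 8 := by norm_num
  have hδ4d0 : 0 < δ / (4 * dR) := by positivity
  have hM : (1:ℝ)/2 ≤ (1 - δ / (4 * dR)) ^ 2 := by nlinarith
  rw [hmain]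
  have hψv0 : 0 ≤ ψ T' v := (hψprops T').1 v
  have hM0 : 0 ≤ 1 - δ / (4 * dR) := by linarith
  have hsq : (ψ T' v) ^ 2 ≤ (1 - δ / (4 * dR)) ^ 2 := by linarith
  have hfinal : ψ T' v ≤ 1 - δ / (4 * dR) :=
    (pow_le_pow_iff_left₀ hψv0 hM0 two_ne_zero).1 hsq
  linarith
end
end

section
/- Let G = (V = A ∪ B, E) be a finite simple undirected connected graph with B nonempty, such that d_G(v) ≤ d for every v ∈ A (with d ≥ 1), and such that for some real 0 < δ < 1/2 every nonempty A' ⊆ A satisfies |∂_G(A')| ≥ δ·|A'|. Let G' be the weighted graph obtained by contracting B to a single vertex b*. Then the weighted conductance of G' satisfies φ(G') ≥ δ/d; that is, every nonempty S ⊆ A ∪ {b*} with vol_{G'}(S) ≤ vol_{G'}(A ∪ {b*})/2 satisfies w(∂_{G'}(S)) ≥ (δ/d)·vol_{G'}(S). -/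
open scoped Classical

noncomputable section

/-- Edge weights of the weighted graph `G'` obtained from `G` by contracting
`B` to a single vertex `b*` (represented by `none`); the other vertices are
those of `A`. Edges inside `A` keep weight `1`, and the weight of `{u, b*}` is
the number of `B`-neighbors of `u` in `G`. -/
def cweight {V : Type*} (G : SimpleGraph V) (A B : Set V) :
    Option {v : V // v ∈ A} → Option {v : V // v ∈ A} → ℝ
  | some u, some v => if G.Adj u.1 v.1 then 1 else 0
  | some u, none => (({b | b ∈ B ∧ G.Adj u.1 b}).ncard : ℝ)
  | none, some v => (({b | b ∈ B ∧ G.Adj v.1 b}).ncard : ℝ)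
  | none, none => 0

/-- Total weight `w(∂(S))` of the edge boundary of `S` in a weighted graph
with symmetric weight function `w`. -/
def wBoundary {α : Type*} [Fintype α] (w : α → α → ℝ) (S : Set α) : ℝ :=
  ∑ u, ∑ v, if u ∈ S ∧ v ∉ S then w u v else 0

/-- The volume `vol(S) = Σ_{u ∈ S} Σ_v w(u,v)` of a vertex set in a weighted
graph with symmetric weight function `w`. -/
def wVol {α : Type*} [Fintype α] (w : α → α → ℝ) (S : Set α) : ℝ :=
  ∑ u, ∑ v, if u ∈ S then w u v else 0

set_option linter.unusedSectionVars false

section Helpers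
variable {V : Type*} [Fintype V] [DecidableEq V]

lemma ncard_eq_sum_real {α : Type*} [Fintype α] (s : Set α) :
    (s.ncard : ℝ) = ∑ v : α, if v ∈ s then (1 : ℝ) else 0 := by
  rw [Set.ncard_eq_toFinset_card', Finset.sum_boole]
  congr 1; congr 1
  ext v; simp

lemma sum_restrict {α : Type*} [Fintype α] (t : Finset α) (f : α → ℝ)
    (h0 : ∀ v, v ∉ t → f v = 0) : ∑ v : α, f v = ∑ v ∈ t, f v :=
  (Finset.sum_subset (Finset.subset_univ t) fun x _ hx => h0 x hx).symm

lemma ncard_eq_sum_over (s : Set V) (t : Finset V) (hst : ∀ v ∈ s, v ∈ t) :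
    (s.ncard : ℝ) = ∑ v ∈ t, if v ∈ s then (1 : ℝ) else 0 := by
  rw [ncard_eq_sum_real]
  exact sum_restrict t _ (fun x hx => if_neg (fun h => hx (hst x h)))

lemma ncardB (B : Set V) (P : V → Prop) :
    (({b | b ∈ B ∧ P b}).ncard : ℝ) = ∑ v ∈ B.toFinset, if P v then (1 : ℝ) else 0 := by
  rw [ncard_eq_sum_over _ B.toFinset (fun v hv => Set.mem_toFinset.mpr hv.1)]
  refine Finset.sum_congr rfl fun v hv => ?_
  have : v ∈ B := Set.mem_toFinset.mp hv
  simp [this]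

lemma sum_option_subtype {A : Set V} (f : Option {v : V // v ∈ A} → ℝ) :
    ∑ x : Option {v : V // v ∈ A}, f x
      = f none + ∑ v ∈ A.toFinset, (if h : v ∈ A then f (some ⟨v, h⟩) else 0) := by
  rw [Fintype.sum_option]
  congr 1
  rw [Finset.sum_subtype A.toFinset (fun x => Set.mem_toFinset)
      (fun v => if h : v ∈ A then f (some ⟨v, h⟩) else 0)]
  exact Finset.sum_congr rfl fun a _ => by rw [dif_pos a.2]

lemma sum_split (A B : Set V) (hunion : A ∪ B = Set.univ) (hdisj : Disjoint A B)
    (f : V → ℝ) :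
    ∑ v : V, f v = ∑ v ∈ A.toFinset, f v + ∑ v ∈ B.toFinset, f v := by
  rw [← Finset.sum_union (Set.disjoint_toFinset.mpr hdisj)]
  apply Finset.sum_congr _ (fun _ _ => rfl)
  ext v
  simp only [Finset.mem_univ, Finset.mem_union, Set.mem_toFinset, true_iff]
  have : v ∈ A ∪ B := hunion ▸ Set.mem_univ v
  exact this

lemma edgeBoundary_ncard_sum (G : SimpleGraph V) (S' : Set V) :
    ((edgeBoundary G S').ncard : ℝ)
      = ∑ u : V, ∑ v : V, if u ∈ S' ∧ v ∉ S' ∧ G.Adj u v then (1 : ℝ) else 0 := by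
  have himg : edgeBoundary G S'
      = (fun p : V × V => s(p.1, p.2)) '' {p : V × V | p.1 ∈ S' ∧ p.2 ∉ S' ∧ G.Adj p.1 p.2} := by
    ext e
    constructor
    · rintro ⟨he, u, v, rfl, hu, hv⟩
      exact ⟨(u, v), ⟨hu, hv, he⟩, rfl⟩
    · rintro ⟨⟨u, v⟩, ⟨hu, hv, ha⟩, rfl⟩
      exact ⟨ha, u, v, rfl, hu, hv⟩
  have hinj : Set.InjOn (fun p : V × V => s(p.1, p.2))
      {p : V × V | p.1 ∈ S' ∧ p.2 ∉ S' ∧ G.Adj p.1 p.2} := by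
    rintro ⟨u, v⟩ ⟨hu, hv, _⟩ ⟨u', v'⟩ ⟨hu', hv', _⟩ heq
    simp only [Sym2.eq_iff] at heq
    rcases heq with ⟨rfl, rfl⟩ | ⟨rfl, rfl⟩
    · rfl
    · exact absurd hu hv'
  rw [himg, Set.ncard_image_of_injOn hinj, ncard_eq_sum_real, Fintype.sum_prod_type]
  exact Finset.sum_congr rfl fun u _ => Finset.sum_congr rfl fun v _ => by simp

variable {V : Type*} [Fintype V] [DecidableEq V]

lemma cweight_comm (G : SimpleGraph V) (A B : Set V) (u v : Option {v : V // v ∈ A}) :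
    cweight G A B u v = cweight G A B v u := by
  cases u <;> cases v <;> simp only [cweight]
  rw [SimpleGraph.adj_comm]

lemma cweight_nonneg (G : SimpleGraph V) (A B : Set V) (u v : Option {v : V // v ∈ A}) :
    0 ≤ cweight G A B u v := by
  cases u <;> cases v <;> simp only [cweight] <;>
    first
      | positivity
      | (split <;> norm_num)

lemma wVol_nonneg {α : Type*} [Fintype α] (w : α → α → ℝ) (hw : ∀ u v, 0 ≤ w u v)
    (S : Set α) : 0 ≤ wVol w S := by
  refine Finset.sum_nonneg fun u _ => Finset.sum_nonneg fun v _ => ?_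
  split
  · exact hw u v
  · exact le_refl 0

lemma wBoundary_nonneg {α : Type*} [Fintype α] (w : α → α → ℝ) (hw : ∀ u v, 0 ≤ w u v)
    (S : Set α) : 0 ≤ wBoundary w S := by
  refine Finset.sum_nonneg fun u _ => Finset.sum_nonneg fun v _ => ?_
  split
  · exact hw u v
  · exact le_refl 0

lemma wVol_add_compl {α : Type*} [Fintype α] (w : α → α → ℝ) (S : Set α) :
    wVol w S + wVol w Sᶜ = wVol w Set.univ := by
  simp only [wVol, ← Finset.sum_add_distrib]
  refine Finset.sum_congr rfl fun u _ => Finset.sum_congr rfl fun v _ => ?_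
  by_cases h : u ∈ S <;> simp [h]

lemma wBoundary_compl {α : Type*} [Fintype α] (w : α → α → ℝ)
    (hw : ∀ u v, w u v = w v u) (S : Set α) :
    wBoundary w Sᶜ = wBoundary w S := by
  unfold wBoundary
  rw [Finset.sum_comm]
  refine Finset.sum_congr rfl fun u _ => Finset.sum_congr rfl fun v _ => ?_
  by_cases h1 : u ∈ S <;> by_cases h2 : v ∈ S <;> simp [h1, h2, hw v u]


lemma core_bound {V : Type*} [Fintype V] [DecidableEq V]
    (G : SimpleGraph V) (A B : Set V) (hunion : A ∪ B = Set.univ) (hdisj : Disjoint A B)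
    (d : ℕ) (hd : 1 ≤ d)
    (hdeg : ∀ v ∈ A, {w | G.Adj v w}.ncard ≤ d)
    (δ : ℝ) (hδ0 : 0 < δ)
    (hexp : ∀ A' ⊆ A, A'.Nonempty →
      δ * (A'.ncard : ℝ) ≤ ((edgeBoundary G A').ncard : ℝ))
    (S : Set (Option {v : V // v ∈ A})) (hS : S.Nonempty) (hnone : none ∉ S) :
    (δ / d) * wVol (cweight G A B) S ≤ wBoundary (cweight G A B) S := by
  set w : Option {v : V // v ∈ A} → Option {v : V // v ∈ A} → ℝ := cweight G A B with hwdef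
  obtain ⟨S', memS', hS'A, hS'ne⟩ :
      ∃ S' : Set V, (∀ (v : V) (h : v ∈ A), (v ∈ S' ↔ some ⟨v, h⟩ ∈ S)) ∧ S' ⊆ A ∧ S'.Nonempty := by
    refine ⟨{v : V | ∃ h : v ∈ A, some ⟨v, h⟩ ∈ S},
      fun v h => ⟨fun ⟨h', hs⟩ => hs, fun hs => ⟨h, hs⟩⟩, fun v hv => hv.1, ?_⟩
    obtain ⟨x, hx⟩ := hS
    match x with
    | none => exact absurd hx hnone
    | some a => exact ⟨a.1, a.2, hx⟩
  -- degree identity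
  have hdegsum : ∀ (u : V) (h : u ∈ A),
      ∑ v : Option {v : V // v ∈ A}, w (some ⟨u, h⟩) v
        = ∑ v ∈ A.toFinset, (if G.Adj u v then (1:ℝ) else 0)
          + ∑ v ∈ B.toFinset, (if G.Adj u v then (1:ℝ) else 0) := by
    intro u h
    rw [sum_option_subtype, add_comm]
    congr 1
    · refine Finset.sum_congr rfl fun v hv => ?_
      rw [dif_pos (Set.mem_toFinset.mp hv)]
      rfl
    · exact ncardB B _
  have hdeg' : ∀ u ∈ A,
      (∑ v ∈ A.toFinset, (if G.Adj u v then (1:ℝ) else 0)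
        + ∑ v ∈ B.toFinset, (if G.Adj u v then (1:ℝ) else 0)) ≤ (d : ℝ) := by
    intro u hu
    have h1 : (({x | G.Adj u x}).ncard : ℝ)
        = ∑ v ∈ A.toFinset, (if G.Adj u v then (1:ℝ) else 0)
          + ∑ v ∈ B.toFinset, (if G.Adj u v then (1:ℝ) else 0) := by
      rw [ncard_eq_sum_real, sum_split A B hunion hdisj]
      simp only [Set.mem_setOf_eq]
    rw [← h1]
    exact_mod_cast hdeg u hu
  -- per-vertex volume term
  have huterm : ∀ (u : V) (hu : u ∈ A),
      (∑ v : Option {v : V // v ∈ A}, if some ⟨u, hu⟩ ∈ S then w (some ⟨u, hu⟩) v else 0)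
        = (if u ∈ S' then
            (∑ v ∈ A.toFinset, (if G.Adj u v then (1:ℝ) else 0)
              + ∑ v ∈ B.toFinset, (if G.Adj u v then (1:ℝ) else 0)) else 0) := by
    intro u hu
    by_cases hus : u ∈ S'
    · have hs : some ⟨u, hu⟩ ∈ S := (memS' u hu).mp hus
      simp only [if_pos hus, if_pos hs]
      exact hdegsum u hu
    · have hs : some ⟨u, hu⟩ ∉ S := fun hsmem => hus ((memS' u hu).mpr hsmem)
      simp [hs, hus]
  have hvol : wVol w S = ∑ u ∈ A.toFinset,
      (if u ∈ S' then
        (∑ v ∈ A.toFinset, (if G.Adj u v then (1:ℝ) else 0)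
          + ∑ v ∈ B.toFinset, (if G.Adj u v then (1:ℝ) else 0)) else 0) := by
    unfold wVol
    rw [sum_option_subtype (fun u => ∑ v, if u ∈ S then w u v else 0)]
    simp only [hnone, if_false]
    rw [Finset.sum_const_zero, zero_add]
    refine Finset.sum_congr rfl fun u hu => ?_
    rw [dif_pos (Set.mem_toFinset.mp hu)]
    exact huterm u _
  -- volume bound
  have hvol_le : wVol w S ≤ (d:ℝ) * S'.ncard := by
    rw [hvol]
    have step1 : ∑ u ∈ A.toFinset,
        (if u ∈ S' then
          (∑ v ∈ A.toFinset, (if G.Adj u v then (1:ℝ) else 0)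
            + ∑ v ∈ B.toFinset, (if G.Adj u v then (1:ℝ) else 0)) else 0)
        ≤ ∑ u ∈ A.toFinset, (if u ∈ S' then (d:ℝ) else 0) := by
      refine Finset.sum_le_sum fun u hu => ?_
      by_cases h : u ∈ S'
      · simp only [if_pos h]
        exact hdeg' u (Set.mem_toFinset.mp hu)
      · simp [h]
    have step2 : ∑ u ∈ A.toFinset, (if u ∈ S' then (d:ℝ) else 0) = (d:ℝ) * S'.ncard := by
      rw [ncard_eq_sum_over S' A.toFinset (fun v hv => Set.mem_toFinset.mpr (hS'A hv)),
        Finset.mul_sum]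
      exact Finset.sum_congr rfl fun u _ => by by_cases h : u ∈ S' <;> simp [h]
    linarith
  -- boundary identity
  have hbdy : wBoundary w S = ((edgeBoundary G S').ncard : ℝ) := by
    have hres : (∑ u : V, ∑ v : V, if u ∈ S' ∧ v ∉ S' ∧ G.Adj u v then (1:ℝ) else 0)
        = ∑ u ∈ A.toFinset, ∑ v : V, if u ∈ S' ∧ v ∉ S' ∧ G.Adj u v then (1:ℝ) else 0 :=
      sum_restrict A.toFinset _
        (fun u hu => by
          have : u ∉ S' := fun h => hu (Set.mem_toFinset.mpr (hS'A h))
          simp [this])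
    rw [edgeBoundary_ncard_sum]
    rw [hres]
    unfold wBoundary
    rw [sum_option_subtype (fun u => ∑ v, if u ∈ S ∧ v ∉ S then w u v else 0)]
    simp only [hnone, false_and, if_false]
    rw [Finset.sum_const_zero, zero_add]
    refine Finset.sum_congr rfl fun u hu' => ?_
    rw [dif_pos (Set.mem_toFinset.mp hu')]
    set hu : u ∈ A := Set.mem_toFinset.mp hu' with hhu
    by_cases hus : u ∈ S'
    · have hs : some ⟨u, hu⟩ ∈ S := (memS' u hu).mp hus
      simp only [hs, true_and, hus]
      rw [sum_option_subtype (fun v => if v ∉ S then w (some ⟨u, hu⟩) v else 0)]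
      rw [if_pos hnone]
      have hB : (w (some ⟨u, hu⟩) none : ℝ)
          = ∑ v ∈ B.toFinset, (if G.Adj u v then (1:ℝ) else 0) := ncardB B _
      rw [hB]
      rw [sum_split A B hunion hdisj
        (fun v => if v ∉ S' ∧ G.Adj u v then (1:ℝ) else 0)]
      rw [add_comm]
      congr 1
      · refine Finset.sum_congr rfl fun v hv' => ?_
        have hv : v ∈ A := Set.mem_toFinset.mp hv'
        rw [dif_pos hv]
        by_cases hvs : v ∈ S'
        · have : some ⟨v, hv⟩ ∈ S := (memS' v hv).mp hvs
          simp [this, hvs]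
        · have : some ⟨v, hv⟩ ∉ S := fun hm => hvs ((memS' v hv).mpr hm)
          simp [hwdef, cweight, this, hvs]
      · refine Finset.sum_congr rfl fun v hv' => ?_
        have hv : v ∈ B := Set.mem_toFinset.mp hv'
        have hvs : v ∉ S' := fun h => (hdisj.le_bot ⟨hS'A h, hv⟩)
        simp [hvs]
    · have hs : some ⟨u, hu⟩ ∉ S := fun hm => hus ((memS' u hu).mpr hm)
      simp [hs, hus]
  -- combine
  have hbd := hexp S' hS'A hS'ne
  have hdpos : (0:ℝ) < d := by exact_mod_cast hd
  have hfrac : (0:ℝ) ≤ δ / d := by positivity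
  calc (δ / d) * wVol w S ≤ (δ / d) * ((d:ℝ) * S'.ncard) :=
        mul_le_mul_of_nonneg_left hvol_le hfrac
    _ = δ * S'.ncard := by field_simp
    _ ≤ ((edgeBoundary G S').ncard : ℝ) := hbd
    _ = wBoundary w S := hbdy.symm

end Helpers

/-- Conductance of the contracted graph: if every vertex of `A` has degree at
most `d ≥ 1` in `G` and every nonempty `A' ⊆ A` has `|∂_G(A')| ≥ δ|A'|` for
some `0 < δ < 1/2`, then the weighted graph `G'` obtained by contracting `B`
to `b*` has conductance at least `δ/d`: every nonempty `S ⊆ A ∪ {b*}` with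
`vol(S) ≤ vol(A ∪ {b*})/2` satisfies `w(∂_{G'}(S)) ≥ (δ/d)·vol(S)`. -/
theorem contracted_graph_conductance
    {V : Type*} [Fintype V] [DecidableEq V]
    (G : SimpleGraph V) (hconn : G.Connected)
    (A B : Set V) (hunion : A ∪ B = Set.univ) (hdisj : Disjoint A B)
    (hB : B.Nonempty)
    (d : ℕ) (hd : 1 ≤ d)
    (hdeg : ∀ v ∈ A, {w | G.Adj v w}.ncard ≤ d)
    (δ : ℝ) (hδ0 : 0 < δ) (hδhalf : δ < 1 / 2)
    (hexp : ∀ A' ⊆ A, A'.Nonempty →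
      δ * (A'.ncard : ℝ) ≤ ((edgeBoundary G A').ncard : ℝ)) :
    ∀ S : Set (Option {v : V // v ∈ A}), S.Nonempty →
      wVol (cweight G A B) S ≤ wVol (cweight G A B) Set.univ / 2 →
      (δ / d) * wVol (cweight G A B) S ≤ wBoundary (cweight G A B) S := by
  intro S hS hvol
  by_cases hn : none ∈ S
  · by_cases hT : Sᶜ.Nonempty
    · have hnone' : (none : Option {v : V // v ∈ A}) ∉ Sᶜ := by simp [hn]
      have hcore := core_bound G A B hunion hdisj d hd hdeg δ hδ0 hexp Sᶜ hT hnone'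
      have hadd := wVol_add_compl (cweight G A B) S
      have hvc : wVol (cweight G A B) S ≤ wVol (cweight G A B) Sᶜ := by linarith
      have hfrac : (0:ℝ) ≤ δ / d := by positivity
      calc (δ / d) * wVol (cweight G A B) S
          ≤ (δ / d) * wVol (cweight G A B) Sᶜ := mul_le_mul_of_nonneg_left hvc hfrac
        _ ≤ wBoundary (cweight G A B) Sᶜ := hcore
        _ = wBoundary (cweight G A B) S :=
            wBoundary_compl (cweight G A B) (cweight_comm G A B) S
    · have hSu : S = Set.univ := by
        have := Set.not_nonempty_iff_eq_empty.mp hT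
        rw [← Set.compl_empty, ← this, compl_compl]
      have h1 : wVol (cweight G A B) S ≤ 0 := by
        rw [hSu] at hvol ⊢
        linarith
      have h0 : wVol (cweight G A B) S = 0 :=
        le_antisymm h1 (wVol_nonneg _ (cweight_nonneg G A B) S)
      rw [h0, mul_zero]
      exact wBoundary_nonneg _ (cweight_nonneg G A B) S
  · exact core_bound G A B hunion hdisj d hd hdeg δ hδ0 hexp S hS hn
end
end

section
/- Let q ≥ 1 and let H_q be the q-dimensional hypercube graph on vertex set {0,1}^q, where two vertices are adjacent iff they differ in exactly one coordinate. Then the conductance of H_q equals 1/q: for every nonempty S ⊆ {0,1}^q with |S| ≤ 2^{q−1} one has |∂(S)| ≥ |S| (equivalently |∂(S)|/(q·|S|) ≥ 1/q), and there exists a nonempty S ⊆ {0,1}^q with |S| ≤ 2^{q−1} and |∂(S)| = |S|. -/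
open scoped Classical

noncomputable section

/-- The `q`-dimensional hypercube graph on vertex set `{0,1}^q`: two vertices
are adjacent iff they differ in exactly one coordinate. -/
def hypercube (q : ℕ) : SimpleGraph (Fin q → Bool) where
  Adj x y := ∃! i, x i ≠ y i
  symm := by
    constructor
    rintro x y ⟨i, hi, hu⟩
    exact ⟨i, hi.symm, fun j hj => hu j hj.symm⟩
  loopless := by
    constructor
    rintro x ⟨i, hi, -⟩
    exact hi rfl

namespace HCaux

variable {q : ℕ}

/-- interpolation along the bit-fixing path -/
def Z (u v : Fin q → Bool) (k : ℕ) : Fin q → Bool :=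
  fun j => if (j : ℕ) < k then v j else u j

lemma Z_zero (u v : Fin q → Bool) : Z u v 0 = u :=
  funext fun j => by simp [Z]

lemma Z_top (u v : Fin q → Bool) : Z u v q = v :=
  funext fun j => by simp [Z, j.isLt]

lemma crossing_aux {p : ℕ → Prop} :
    ∀ n, ¬ p 0 → p n → ∃ k, k + 1 ≤ n ∧ ¬ p k ∧ p (k + 1) := by
  intro n
  induction n with
  | zero => intro h0 hn; exact absurd hn h0
  | succ m ih =>
    intro h0 hn
    by_cases hm : p m
    · obtain ⟨k, hk, h1, h2⟩ := ih h0 hm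
      exact ⟨k, by omega, h1, h2⟩
    · exact ⟨m, le_refl _, hm, hn⟩

lemma card_fixed (hq : 1 ≤ q) (i : Fin q) (b : Bool) :
    (Finset.univ.filter (fun w : Fin q → Bool => w i = b)).card = 2 ^ (q - 1) := by
  rw [← Fintype.card_subtype]
  have e : {w : Fin q → Bool // w i = b} ≃ ({j : Fin q // j ≠ i} → Bool) :=
    { toFun := fun w j => w.1 j.1
      invFun := fun g => ⟨fun j => if h : j = i then b else g ⟨j, h⟩, by simp⟩
      left_inv := fun w => by
        ext j
        by_cases h : j = i
        · subst h; simp [w.2]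
        · simp [h]
      right_inv := fun g => by
        ext j
        simp [j.2] }
  rw [Fintype.card_congr e, Fintype.card_fun, Fintype.card_bool,
    Fintype.card_subtype_compl, Fintype.card_subtype_eq, Fintype.card_fin]

/-- key double counting lemma: `|S| ≤ |directed boundary|` -/
lemma lower (hq : 1 ≤ q) (S : Finset (Fin q → Bool)) (hS : S.card ≤ 2 ^ (q - 1)) :
    S.card ≤ (Finset.univ.filter (fun p : (Fin q → Bool) × (Fin q → Bool) =>
      (hypercube q).Adj p.1 p.2 ∧ p.1 ∈ S ∧ p.2 ∉ S)).card := by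
  classical
  set D := Finset.univ.filter (fun p : (Fin q → Bool) × (Fin q → Bool) =>
      (hypercube q).Adj p.1 p.2 ∧ p.1 ∈ S ∧ p.2 ∉ S) with hD
  -- crossing existence
  have hcross : ∀ p : (Fin q → Bool) × (Fin q → Bool), p.1 ∈ S → p.2 ∉ S →
      ∃ k, k + 1 ≤ q ∧ Z p.1 p.2 k ∈ S ∧ Z p.1 p.2 (k + 1) ∉ S := by
    intro p hu hv
    have := crossing_aux (p := fun k => Z p.1 p.2 k ∉ S) q
      (by simpa [Z_zero] using not_not.mpr hu) (by simpa [Z_top] using hv)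
    obtain ⟨k, hk, h1, h2⟩ := this
    exact ⟨k, hk, not_not.mp h1, h2⟩
  set K : (Fin q → Bool) × (Fin q → Bool) → ℕ := fun p =>
    if h : ∃ k, k + 1 ≤ q ∧ Z p.1 p.2 k ∈ S ∧ Z p.1 p.2 (k + 1) ∉ S then h.choose else 0
    with hK
  have Kspec : ∀ p : (Fin q → Bool) × (Fin q → Bool), p.1 ∈ S → p.2 ∉ S →
      K p + 1 ≤ q ∧ Z p.1 p.2 (K p) ∈ S ∧ Z p.1 p.2 (K p + 1) ∉ S := by
    intro p hu hv
    have h := hcross p hu hv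
    simp only [hK, dif_pos h]
    exact h.choose_spec
  set f : (Fin q → Bool) × (Fin q → Bool) → (Fin q → Bool) × (Fin q → Bool) :=
    fun p => (Z p.1 p.2 (K p), Z p.1 p.2 (K p + 1)) with hf
  set g : (Fin q → Bool) × (Fin q → Bool) → (Fin q → Bool) :=
    fun p => fun j => if (j : ℕ) < K p then p.1 j else p.2 j with hg
  -- facts about Z at a crossing
  have Zdiff : ∀ (u v : Fin q → Bool) (k : ℕ) (j : Fin q),
      (j : ℕ) ≠ k → Z u v k j = Z u v (k+1) j := by
    intro u v k j hj
    simp only [Z]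
    by_cases h : (j : ℕ) < k
    · rw [if_pos h, if_pos (by omega)]
    · rw [if_neg h, if_neg (by omega)]
  have ZeqK : ∀ (u v : Fin q → Bool) (k : ℕ) (hk : k < q),
      Z u v k ⟨k, hk⟩ = u ⟨k, hk⟩ ∧ Z u v (k+1) ⟨k, hk⟩ = v ⟨k, hk⟩ := by
    intro u v k hk
    constructor
    · simp [Z]
    · simp [Z]
  -- f maps pairs into D
  have hmaps : ∀ p ∈ S ×ˢ Sᶜ, f p ∈ D := by
    intro p hp
    rw [Finset.mem_product] at hp
    obtain ⟨hu, hv⟩ := hp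
    rw [Finset.mem_compl] at hv
    obtain ⟨hKle, hxS, hyS⟩ := Kspec p hu hv
    have hklt : K p < q := by omega
    have hxy : Z p.1 p.2 (K p) ≠ Z p.1 p.2 (K p + 1) := by
      intro h; rw [h] at hxS; exact hyS hxS
    have huvK : p.1 ⟨K p, hklt⟩ ≠ p.2 ⟨K p, hklt⟩ := by
      intro h
      apply hxy
      funext j
      by_cases hj : (j : ℕ) = K p
      · have : j = ⟨K p, hklt⟩ := Fin.ext hj
        subst this
        rw [(ZeqK p.1 p.2 (K p) hklt).1, (ZeqK p.1 p.2 (K p) hklt).2, h]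
      · exact Zdiff p.1 p.2 (K p) j hj
    rw [hD, Finset.mem_filter]
    refine ⟨Finset.mem_univ _, ⟨⟨K p, hklt⟩, ?_, ?_⟩, hxS, hyS⟩
    · rw [hf]
      simp only
      rw [(ZeqK p.1 p.2 (K p) hklt).1, (ZeqK p.1 p.2 (K p) hklt).2]
      exact huvK
    · intro j hj
      by_contra hne
      have : (j : ℕ) ≠ K p := fun h => hne (Fin.ext h)
      exact hj (Zdiff p.1 p.2 (K p) j this)
  -- fiber bound
  have hfiber : ∀ e ∈ D, ((S ×ˢ Sᶜ).filter (fun p => f p = e)).card ≤ 2 ^ (q - 1) := by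
    intro e he
    rw [hD, Finset.mem_filter] at he
    obtain ⟨-, ⟨i, hi, hiu⟩, hxS, hyS⟩ := he
    -- every p in the fiber has K p = i
    have hKp : ∀ p ∈ (S ×ˢ Sᶜ).filter (fun p => f p = e), K p = (i : ℕ) ∧
        (∀ j : Fin q, (j : ℕ) ≥ K p → p.1 j = e.1 j) ∧
        (∀ j : Fin q, (j : ℕ) < K p + 1 → p.2 j = e.2 j) := by
      intro p hp
      rw [Finset.mem_filter, Finset.mem_product, Finset.mem_compl] at hp
      obtain ⟨⟨hu, hv⟩, hfe⟩ := hp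
      obtain ⟨hKle, hxS', hyS'⟩ := Kspec p hu hv
      have hklt : K p < q := by omega
      have hx : Z p.1 p.2 (K p) = e.1 := congrArg Prod.fst hfe
      have hy : Z p.1 p.2 (K p + 1) = e.2 := congrArg Prod.snd hfe
      have hKi : K p = (i : ℕ) := by
        by_contra hne
        have : e.1 i = e.2 i := by
          rw [← hx, ← hy]
          exact Zdiff p.1 p.2 (K p) i (fun h => hne h.symm)
        exact hi this
      refine ⟨hKi, ?_, ?_⟩
      · intro j hj
        rw [← hx]
        simp only [Z]
        rw [if_neg (by omega)]
      · intro j hj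
        rw [← hy]
        simp only [Z]
        rw [if_pos (by omega)]
    refine le_trans (Finset.card_le_card_of_injOn g ?_ ?_) (le_of_eq (card_fixed hq i (e.2 i)))
    · -- maps into fixed-coordinate filter
      intro p hp
      obtain ⟨hKi, hx1, hy1⟩ := hKp p hp
      rw [Finset.mem_coe, Finset.mem_filter]
      refine ⟨Finset.mem_univ _, ?_⟩
      show (if (i : ℕ) < K p then p.1 i else p.2 i) = e.2 i
      rw [if_neg (by omega), hy1 i (by omega)]
    · intro p hp p' hp' hgp
      obtain ⟨hKi, hx1, hy1⟩ := hKp p (by exact hp)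
      obtain ⟨hKi', hx1', hy1'⟩ := hKp p' (by exact hp')
      have hKK : K p = K p' := by rw [hKi, hKi']
      have h1 : p.1 = p'.1 := by
        funext j
        by_cases hj : (j : ℕ) < K p
        · have := congrFun hgp j
          rw [hg] at this
          simp only at this
          rw [if_pos hj, if_pos (hKK ▸ hj)] at this
          exact this
        · rw [hx1 j (by omega), ← hx1' j (by omega)]
      have h2 : p.2 = p'.2 := by
        funext j
        by_cases hj : (j : ℕ) < K p
        · rw [hy1 j (by omega), ← hy1' j (by omega)]
        · have := congrFun hgp j
          rw [hg] at this
          simp only at this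
          rw [if_neg hj, if_neg (hKK ▸ hj)] at this
          exact this
      exact Prod.ext h1 h2
  -- counting
  have hsub : S ×ˢ Sᶜ ⊆ D.biUnion (fun e => (S ×ˢ Sᶜ).filter (fun p => f p = e)) := by
    intro p hp
    rw [Finset.mem_biUnion]
    exact ⟨f p, hmaps p hp, Finset.mem_filter.mpr ⟨hp, rfl⟩⟩
  have h1 : (S ×ˢ Sᶜ).card ≤ D.card * 2 ^ (q - 1) :=
    le_trans (Finset.card_le_card hsub) (Finset.card_biUnion_le_card_mul D _ _ hfiber)
  rw [Finset.card_product, Finset.card_compl] at h1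
  have hV : Fintype.card (Fin q → Bool) = 2 ^ q := by simp
  have h2 : 2 ^ (q - 1) ≤ Fintype.card (Fin q → Bool) - S.card := by
    rw [hV]
    have : 2 ^ q = 2 ^ (q - 1) * 2 := by
      rw [← pow_succ]
      congr 1
      omega
    omega
  have h3 : S.card * 2 ^ (q - 1) ≤ D.card * 2 ^ (q - 1) :=
    le_trans (Nat.mul_le_mul_left _ h2) h1
  have hpos : 0 < 2 ^ (q - 1) := by positivity
  exact Nat.le_of_mul_le_mul_right h3 hpos

end HCaux

/-- The conductance of the `q`-dimensional hypercube equals `1/q`: every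
nonempty `S ⊆ {0,1}^q` with `|S| ≤ 2^(q-1)` has `|∂(S)| ≥ |S|` (equivalently
`|∂(S)|/(q|S|) ≥ 1/q`), and some such `S` achieves `|∂(S)| = |S|`. -/
theorem hypercube_conductance (q : ℕ) (hq : 1 ≤ q) :
    (∀ S : Set (Fin q → Bool), S.Nonempty → S.ncard ≤ 2 ^ (q - 1) →
      S.ncard ≤ (edgeBoundary (hypercube q) S).ncard) ∧
    (∃ S : Set (Fin q → Bool), S.Nonempty ∧ S.ncard ≤ 2 ^ (q - 1) ∧
      (edgeBoundary (hypercube q) S).ncard = S.ncard) := by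
  have main : ∀ S : Set (Fin q → Bool), S.Nonempty → S.ncard ≤ 2 ^ (q - 1) →
      S.ncard ≤ (edgeBoundary (hypercube q) S).ncard := by
    intro S _ hcard
    have hfinS : S.Finite := Set.toFinite S
    have hfinB : (edgeBoundary (hypercube q) S).Finite := Set.toFinite _
    rw [Set.ncard_eq_toFinset_card S hfinS] at hcard ⊢
    rw [Set.ncard_eq_toFinset_card _ hfinB]
    refine le_trans (HCaux.lower hq hfinS.toFinset hcard) ?_
    apply Finset.card_le_card_of_injOn (fun p => s(p.1, p.2))
    · intro p hp
      rw [Finset.mem_coe, Finset.mem_filter] at hp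
      obtain ⟨-, hadj, hu, hv⟩ := hp
      rw [Finset.mem_coe, Set.Finite.mem_toFinset]
      exact ⟨(hypercube q).mem_edgeSet.mpr hadj, p.1, p.2, rfl,
        hfinS.mem_toFinset.mp hu, fun h => hv (hfinS.mem_toFinset.mpr h)⟩
    · intro p hp p' hp' hee
      simp only [Finset.coe_filter, Set.mem_setOf_eq] at hp hp'
      obtain ⟨-, -, hu, hv⟩ := hp
      obtain ⟨-, -, hu', hv'⟩ := hp'
      rcases Sym2.eq_iff.mp hee with ⟨h1, h2⟩ | ⟨h1, h2⟩
      · exact Prod.ext h1 h2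
      · exact absurd (h1 ▸ hu) hv'
  refine ⟨main, ?_⟩
  set i0 : Fin q := ⟨0, hq⟩ with hi0
  set S : Set (Fin q → Bool) := {x | x i0 = false} with hSdef
  have hfinS : S.Finite := Set.toFinite S
  have hSfin_eq : hfinS.toFinset = Finset.univ.filter (fun w => w i0 = false) := by
    ext w
    simp [hSdef]
  have hScard : S.ncard = 2 ^ (q - 1) := by
    rw [Set.ncard_eq_toFinset_card S hfinS, hSfin_eq]
    exact HCaux.card_fixed hq i0 false
  have hne : S.Nonempty := ⟨fun _ => false, by simp [hSdef]⟩
  refine ⟨S, hne, le_of_eq hScard, ?_⟩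
  have hfinB : (edgeBoundary (hypercube q) S).Finite := Set.toFinite _
  have hub : (edgeBoundary (hypercube q) S).ncard ≤ S.ncard := by
    rw [Set.ncard_eq_toFinset_card _ hfinB, Set.ncard_eq_toFinset_card S hfinS]
    have hsub : hfinB.toFinset ⊆
        hfinS.toFinset.image (fun x => s(x, Function.update x i0 true)) := by
      intro e he
      rw [Set.Finite.mem_toFinset] at he
      obtain ⟨hedge, u, v, rfl, hu, hv⟩ := he
      have hadj : (hypercube q).Adj u v := (hypercube q).mem_edgeSet.mp hedge
      obtain ⟨i, hi, hiu⟩ := hadj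
      have hu0 : u i0 = false := hu
      have hv0 : v i0 = true := by
        cases hv0' : v i0
        · exact absurd hv0' hv
        · rfl
      have hdiff : u i0 ≠ v i0 := by rw [hu0, hv0]; simp
      have hii0 : i0 = i := hiu i0 hdiff
      have hvu : v = Function.update u i0 true := by
        funext j
        by_cases hj : j = i0
        · subst hj
          rw [hv0, Function.update_self]
        · rw [Function.update_of_ne hj]
          by_contra hne'
          exact hj (((hiu j (fun h => hne' h.symm)).trans hii0.symm))
      rw [Finset.mem_image]
      exact ⟨u, hfinS.mem_toFinset.mpr hu, by rw [hvu]⟩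
    exact le_trans (Finset.card_le_card hsub) Finset.card_image_le
  exact le_antisymm hub (main S hne (le_of_eq hScard))
end
end

section
/- Let q ≥ 1 and let S ⊆ {0,1}^q with 1 ≤ |S| ≤ 2^{q−1}. Then the number of elements x ∈ S having a hypercube-neighbor outside S (i.e., some y ∉ S differing from x in exactly one coordinate) is at least |S|/q. -/
open scoped Classical

noncomputable section

namespace HCB

variable {q : ℕ}

def flip (x : Fin q → Bool) (i : Fin q) : Fin q → Bool := Function.update x i (!x i)

def edge (S : Finset (Fin q → Bool)) : ℕ :=
  ∑ x ∈ S, (Finset.univ.filter (fun i => flip x i ∉ S)).card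

lemma flip_cons_zero (b : Bool) (f : Fin q → Bool) :
    flip (Fin.cons b f) 0 = Fin.cons (!b) f := by
  simp [flip, Fin.update_cons_zero]

lemma flip_cons_succ (b : Bool) (f : Fin q → Bool) (j : Fin q) :
    flip (Fin.cons b f) j.succ = Fin.cons b (flip f j) := by
  simp [flip, ← Fin.cons_update]

lemma card_le (S : Finset (Fin q → Bool)) : S.card ≤ 2 ^ q := by
  have := Finset.card_le_univ S
  simpa using this

lemma edge_ge : ∀ (q : ℕ) (S : Finset (Fin q → Bool)),
    min S.card (2 ^ q - S.card) ≤ edge S := by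
  intro q
  induction q with
  | zero =>
    intro S
    have := card_le S
    omega
  | succ q ih =>
    intro S
    set A : Finset (Fin q → Bool) := Finset.univ.filter (fun f => Fin.cons false f ∈ S) with hA
    set B : Finset (Fin q → Bool) := Finset.univ.filter (fun f => Fin.cons true f ∈ S) with hB
    have memA : ∀ f, f ∈ A ↔ Fin.cons false f ∈ S := by intro f; simp [hA]
    have memB : ∀ f, f ∈ B ↔ Fin.cons true f ∈ S := by intro f; simp [hB]
    -- card decomposition
    have hcard : S.card = A.card + B.card := by
      have h1 : S.card = ∑ p : Bool × (Fin q → Bool),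
          (if Fin.cons p.1 p.2 ∈ S then 1 else 0) := by
        conv_lhs => rw [← Finset.filter_univ_mem S, Finset.card_filter]
        exact (Fintype.sum_equiv (Fin.consEquiv fun _ => Bool)
          (fun p => if Fin.cons p.1 p.2 ∈ S then 1 else 0)
          (fun x => if x ∈ S then 1 else 0) (fun p => by cases p; rfl)).symm
      rw [h1, Fintype.sum_prod_type, Fintype.sum_bool, hA, hB,
        Finset.card_filter, Finset.card_filter, Nat.add_comm]
    -- counting boundary directions of a vertex, split at coordinate 0
    have hcount : ∀ (b : Bool) (f : Fin q → Bool),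
        (Finset.univ.filter (fun i => flip (Fin.cons b f) i ∉ S)).card
          = (if Fin.cons (!b) f ∈ S then 0 else 1)
            + (Finset.univ.filter (fun j => Fin.cons b (flip f j) ∉ S)).card := by
      intro b f
      rw [Finset.card_filter, Fin.sum_univ_succ, Finset.card_filter, flip_cons_zero]
      have h2 : ∀ j : Fin q, j ∈ Finset.univ →
          (if flip (Fin.cons b f) j.succ ∉ S then 1 else 0)
            = (if Fin.cons b (flip f j) ∉ S then 1 else 0) := by
        intro j _
        rw [flip_cons_succ]
      rw [Finset.sum_congr rfl h2]
      by_cases h : Fin.cons (!b) f ∈ S <;> simp [h]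
    have hhalf : ∀ (b : Bool) (C D : Finset (Fin q → Bool)),
        (∀ f, f ∈ C ↔ Fin.cons b f ∈ S) → (∀ f, f ∈ D ↔ Fin.cons (!b) f ∈ S) →
        ∑ f : Fin q → Bool, (if Fin.cons b f ∈ S then
            (Finset.univ.filter (fun i => flip (Fin.cons b f) i ∉ S)).card else 0)
          = (C \ D).card + edge C := by
      intro b C D memC memD
      have step1 : ∑ f : Fin q → Bool, (if Fin.cons b f ∈ S then
            (Finset.univ.filter (fun i => flip (Fin.cons b f) i ∉ S)).card else 0)
          = ∑ f : Fin q → Bool, (if f ∈ C then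
            ((if f ∈ D then 0 else 1)
              + (Finset.univ.filter (fun j => flip f j ∉ C)).card) else 0) := by
        apply Finset.sum_congr rfl
        intro f _
        rw [hcount b f]
        have e1 : (Finset.univ.filter (fun j => Fin.cons b (flip f j) ∉ S)).card
            = (Finset.univ.filter (fun j => flip f j ∉ C)).card := by
          congr 1
          apply Finset.filter_congr
          intro j _
          simp [memC]
        rw [e1]
        by_cases h1 : f ∈ C
        · rw [if_pos ((memC f).mp h1), if_pos h1]
          by_cases h2 : f ∈ D
          · rw [if_pos ((memD f).mp h2), if_pos h2]
          · rw [if_neg (fun h => h2 ((memD f).mpr h)), if_neg h2]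
        · rw [if_neg (fun h => h1 ((memC f).mpr h)), if_neg h1]
      rw [step1, Finset.sum_ite_mem, Finset.univ_inter, Finset.sum_add_distrib]
      congr 1
      rw [Finset.sdiff_eq_filter, Finset.card_filter]
      apply Finset.sum_congr rfl
      intro f _
      by_cases h : f ∈ D <;> simp [h]
    have hedge : edge S = edge A + edge B + (A \ B).card + (B \ A).card := by
      have h0 : ∑ x : Fin (q + 1) → Bool,
          (if x ∈ S then (Finset.univ.filter (fun i => flip x i ∉ S)).card else 0)
            = ∑ x ∈ S, (Finset.univ.filter (fun i => flip x i ∉ S)).card := by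
        rw [Finset.sum_ite_mem, Finset.univ_inter]
      have h1 : edge S = ∑ p : Bool × (Fin q → Bool),
          (if Fin.cons p.1 p.2 ∈ S then
            (Finset.univ.filter (fun i => flip (Fin.cons p.1 p.2) i ∉ S)).card else 0) := by
        rw [edge, ← h0]
        exact (Fintype.sum_equiv (Fin.consEquiv fun _ => Bool)
          (fun p => if Fin.cons p.1 p.2 ∈ S then
            (Finset.univ.filter (fun i => flip (Fin.cons p.1 p.2) i ∉ S)).card else 0)
          (fun x => if x ∈ S then
            (Finset.univ.filter (fun i => flip x i ∉ S)).card else 0) (fun p => by cases p; rfl)).symm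
      rw [h1, Fintype.sum_prod_type, Fintype.sum_bool,
        hhalf true B A memB (fun f => by rw [Bool.not_true]; exact memA f),
        hhalf false A B memA (fun f => by rw [Bool.not_false]; exact memB f)]
      omega
    have hAB : A.card ≤ B.card + (A \ B).card := by
      have h1 : A.card ≤ (A ∪ B).card := Finset.card_le_card Finset.subset_union_left
      have h2 := Finset.card_sdiff_add_card A B
      omega
    have hBA : B.card ≤ A.card + (B \ A).card := by
      have h1 : B.card ≤ (B ∪ A).card := Finset.card_le_card Finset.subset_union_left
      have h2 := Finset.card_sdiff_add_card B A
      omega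
    have ihA := ih A
    have ihB := ih B
    have hAu := card_le A
    have hBu := card_le B
    have hpow : 2 ^ (q + 1) = 2 ^ q + 2 ^ q := by ring
    omega

end HCB

/-- If `S ⊆ {0,1}^q` is nonempty with `|S| ≤ 2^(q-1)`, then the number of
elements of `S` having a hypercube-neighbor outside `S` (some `y ∉ S`
differing in exactly one coordinate) is at least `|S|/q`. -/
theorem hypercube_boundary_vertices (q : ℕ) (hq : 1 ≤ q)
    (S : Set (Fin q → Bool)) (hS : S.Nonempty) (hcard : S.ncard ≤ 2 ^ (q - 1)) :
    (S.ncard : ℝ) / q ≤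
      (({x | x ∈ S ∧ ∃ y ∉ S, ∃! i, x i ≠ y i}).ncard : ℝ) := by
  classical
  set T : Finset (Fin q → Bool) := (Set.toFinite S).toFinset with hT
  have hmemT : ∀ x, x ∈ T ↔ x ∈ S := fun x => Set.Finite.mem_toFinset _
  have hncard : S.ncard = T.card := Set.ncard_eq_toFinset_card S (Set.toFinite S)
  set Bd : Finset (Fin q → Bool) := T.filter (fun x => ∃ i, HCB.flip x i ∉ T) with hBd
  have hsetEq : {x | x ∈ S ∧ ∃ y ∉ S, ∃! i, x i ≠ y i} = ↑Bd := by
    ext x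
    simp only [Set.mem_setOf_eq, Finset.coe_filter, hBd, hmemT]
    constructor
    · rintro ⟨hxS, y, hyS, i, hi, huniq⟩
      refine ⟨hxS, i, ?_⟩
      have hy : y = HCB.flip x i := by
        funext j
        by_cases hj : j = i
        · subst hj
          simp only [HCB.flip, Function.update_self]
          revert hi; cases x j <;> cases y j <;> decide
        · have h3 : ¬ x j ≠ y j := fun h => hj (huniq j h)
          rw [HCB.flip, Function.update_of_ne hj]
          exact (not_not.mp h3).symm
      rw [← hy]
      exact hyS
    · rintro ⟨hxS, i, hi⟩
      refine ⟨hxS, HCB.flip x i, hi, i, ?_, ?_⟩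
      · simp only [HCB.flip, Function.update_self]
        cases x i <;> decide
      · intro j hj
        by_contra hji
        apply hj
        rw [HCB.flip, Function.update_of_ne hji]
  have h1 : T.card ≤ HCB.edge T := by
    have hmin := HCB.edge_ge q T
    have h2 : 2 * 2 ^ (q - 1) = 2 ^ q := by
      rw [← pow_succ']
      congr 1
      omega
    have h3 : T.card ≤ 2 ^ (q - 1) := by rw [← hncard]; exact hcard
    omega
  have h2 : HCB.edge T ≤ q * Bd.card := by
    have hsplit : HCB.edge T
        = ∑ x ∈ Bd, (Finset.univ.filter (fun i => HCB.flip x i ∉ T)).card := by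
      rw [HCB.edge, hBd, ← Finset.sum_filter_add_sum_filter_not T
        (fun x => ∃ i, HCB.flip x i ∉ T)]
      have hz : ∀ x ∈ T.filter (fun x => ¬ ∃ i, HCB.flip x i ∉ T),
          (Finset.univ.filter (fun i => HCB.flip x i ∉ T)).card = 0 := by
        intro x hx
        rw [Finset.mem_filter] at hx
        push_neg at hx
        simp only [Finset.card_eq_zero, Finset.filter_eq_empty_iff]
        intro i _
        exact fun h => h (hx.2 i)
      rw [Finset.sum_congr rfl hz]
      simp
    rw [hsplit, mul_comm]
    calc ∑ x ∈ Bd, (Finset.univ.filter (fun i => HCB.flip x i ∉ T)).card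
        ≤ ∑ _x ∈ Bd, q := by
          apply Finset.sum_le_sum
          intro x _
          simpa using Finset.card_le_univ (Finset.univ.filter fun i => HCB.flip x i ∉ T)
      _ = Bd.card * q := by rw [Finset.sum_const, smul_eq_mul]
  have hq0 : (0 : ℝ) < q := by exact_mod_cast hq
  rw [div_le_iff₀ hq0, hsetEq, Set.ncard_coe_finset, hncard]
  calc (T.card : ℝ) ≤ ((q * Bd.card : ℕ) : ℝ) := by exact_mod_cast le_trans h1 h2
    _ = (Bd.card : ℝ) * q := by push_cast; ring
end
end

section
/- Consider a reversible circuit with gates G_1,…,G_T on w = p+a+q bits and its associated SetCSP instance 𝒞_x on s = T+w bit strings, and let G_{𝒞_x} be the graph whose vertices are {0,1}^s with an edge between two strings whenever they are C-neighbors for some set-constraint C of 𝒞_x. Then for every y ∈ {0,1}^p, the subgraph of G_{𝒞_x} induced on R_y = { 0^T ‖ y ‖ 0^a ‖ r : r ∈ {0,1}^q } is isomorphic to the q-dimensional hypercube: two vertices of R_y are adjacent in G_{𝒞_x} if and only if their random registers differ in exactly one bit. -/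
/-- A set-constraint on `n`-bit strings: a set `J` of bit positions together
with a collection `Y` of sets of assignments to the bits in `J`. -/
structure SetConstraint (n : ℕ) where
  /-- The bits on which the set-constraint acts. -/
  J : Finset (Fin n)
  /-- The collection `{Y_1, …, Y_ℓ}` of sets of allowed local assignments. -/
  Y : Finset (Finset ({i // i ∈ J} → Bool))

namespace SetConstraint

variable {n : ℕ}

/-- The restriction `x|_{J(C)}` of a string to the bits of the constraint. -/
def res (C : SetConstraint n) (x : Fin n → Bool) : {i // i ∈ C.J} → Bool :=
  fun i => x i.1

/-- The sets in `Y(C)` are pairwise disjoint. -/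
def PairwiseDisjointY (C : SetConstraint n) : Prop :=
  ∀ Y₁ ∈ C.Y, ∀ Y₂ ∈ C.Y, Y₁ ≠ Y₂ → Disjoint Y₁ Y₂

/-- `x` is `C`-bad if `x|_{J(C)}` lies in no set of `Y(C)`. -/
def Bad (C : SetConstraint n) (x : Fin n → Bool) : Prop :=
  ∀ Yi ∈ C.Y, C.res x ∉ Yi

/-- Two distinct strings are `C`-neighbors if they agree outside `J(C)` and
their restrictions to `J(C)` lie in one and the same set of `Y(C)`. -/
def Neighbors (C : SetConstraint n) (x y : Fin n → Bool) : Prop :=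
  x ≠ y ∧ (∀ j, j ∉ C.J → x j = y j) ∧ ∃ Yi ∈ C.Y, C.res x ∈ Yi ∧ C.res y ∈ Yi

/-- `x` is `C`-longing with respect to `S` if `x ∈ S` and `x` is a
`C`-neighbor of some string outside `S`. -/
def Longing (C : SetConstraint n) (S : Set (Fin n → Bool)) (x : Fin n → Bool) : Prop :=
  x ∈ S ∧ ∃ y, y ∉ S ∧ C.Neighbors x y

/-- The set `B_C` of `C`-bad strings in `S`. -/
def badSet (C : SetConstraint n) (S : Set (Fin n → Bool)) : Set (Fin n → Bool) :=
  {x | x ∈ S ∧ C.Bad x}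

/-- The set `L_C` of `C`-longing strings in `S`. -/
def longSet (C : SetConstraint n) (S : Set (Fin n → Bool)) : Set (Fin n → Bool) :=
  {x | C.Longing S x}

/-- `set-unsat(C,S) = (|B_C| + |L_C|)/|S|`. -/
noncomputable def setUnsat (C : SetConstraint n) (S : Set (Fin n → Bool)) : ℝ :=
  (((C.badSet S).ncard : ℝ) + ((C.longSet S).ncard : ℝ)) / (S.ncard : ℝ)

/-- `S` satisfies `C`: every restriction lies in some set of `Y(C)`, and `S`
is closed under replacing the restriction by another string of the same set. -/
def Satisfies (C : SetConstraint n) (S : Set (Fin n → Bool)) : Prop :=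
  (∀ x ∈ S, ∃ Yi ∈ C.Y, C.res x ∈ Yi) ∧
  (∀ x ∈ S, ∀ Yi ∈ C.Y, C.res x ∈ Yi → ∀ y,
    (∀ j, j ∉ C.J → x j = y j) → C.res y ∈ Yi → y ∈ S)

end SetConstraint

/-- `set-unsat(𝒞,S)`: the average of `set-unsat(C_i,S)` over the constraints. -/
noncomputable def setUnsatFam {n m : ℕ} (𝒞 : Fin m → SetConstraint n)
    (S : Set (Fin n → Bool)) : ℝ :=
  (1 / (m : ℝ)) * ∑ i, (𝒞 i).setUnsat S

/-- `set-unsat` of a list of set-constraints: the average of the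
`set-unsat` values of its members. -/
noncomputable def setUnsatList {n : ℕ} (L : List (SetConstraint n))
    (S : Set (Fin n → Bool)) : ℝ :=
  (1 / (L.length : ℝ)) * (L.map (fun C => C.setUnsat S)).sum

/-- A reversible gate on `w` bits: a NOT, CNOT or CCNOT gate applied to
specified (distinct) bit positions. -/
inductive Gate (w : ℕ) where
  | not (i : Fin w) : Gate w
  | cnot (i j : Fin w) (hij : i ≠ j) : Gate w
  | ccnot (i j k : Fin w) (hij : i ≠ j) (hik : i ≠ k) (hjk : j ≠ k) : Gate w

/-- The action of a gate on a `w`-bit string: it acts on its designated bits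
and leaves the rest unchanged. -/
def Gate.apply {w : ℕ} : Gate w → (Fin w → Bool) → (Fin w → Bool)
  | .not i, x => Function.update x i (!x i)
  | .cnot i j _, x => Function.update x j (xor (x i) (x j))
  | .ccnot i j k _ _ _, x => Function.update x k (xor (x i && x j) (x k))

/-- The set of bit positions on which a gate acts. -/
def Gate.support {w : ℕ} : Gate w → Finset (Fin w)
  | .not i => {i}
  | .cnot i j _ => {i, j}
  | .ccnot i j k _ _ _ => {i, j, k}

/-- `runCircuit Gs t x = (G_t ∘ ⋯ ∘ G_1) x`: the snapshot of the computation
after the first `t` gates have been applied to `x`. -/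
def runCircuit {w T : ℕ} (Gs : Fin T → Gate w) : ℕ → (Fin w → Bool) → (Fin w → Bool)
  | 0, x => x
  | t + 1, x =>
      if h : t < T then (Gs ⟨t, h⟩).apply (runCircuit Gs t x)
      else runCircuit Gs t x

/-- The initial work-register string `y ‖ 0^a ‖ r`. -/
def initString (p a q : ℕ) (y : Fin p → Bool) (r : Fin q → Bool) :
    Fin (p + a + q) → Bool :=
  fun i =>
    if h : (i : ℕ) < p then y ⟨i, h⟩
    else if h2 : (i : ℕ) < p + a then false
    else r ⟨(i : ℕ) - (p + a), by have := i.isLt; omega⟩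

/-- The full `s = T + w` bit string `unary(τ) ‖ z`: clock register equal to
`unary(τ)` and work register equal to `z`. -/
def snapshot (p a q T : ℕ) (τ : ℕ) (z : Fin (p + a + q) → Bool) :
    Fin (T + (p + a + q)) → Bool :=
  fun i =>
    if h : (i : ℕ) < T then decide ((i : ℕ) < τ)
    else z ⟨(i : ℕ) - T, by have := i.isLt; omega⟩

/-- Restriction of a full string to the bits in `J`. -/
def restr {n : ℕ} (J : Finset (Fin n)) (x : Fin n → Bool) :
    {i // i ∈ J} → Bool :=
  fun i => x i.1

/-- The assignment on a two-element index set `{i1, i2}` taking value `b1` at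
`i1` and `b2` at `i2`. -/
def pat2 {n : ℕ} (i1 i2 : Fin n) (b1 b2 : Bool) :
    {i // i ∈ ({i1, i2} : Finset (Fin n))} → Bool :=
  fun i => if i.1 = i1 then b1 else b2


/-- Convenience constructor for a set-constraint acting on the two bits
`i1, i2`; each group of pairs `(b1, b2)` of allowed values (value `b1` at
`i1`, value `b2` at `i2`) becomes one set of the collection `Y`. -/
def mk2 {n : ℕ} (i1 i2 : Fin n) (groups : Finset (Finset (Bool × Bool))) :
    SetConstraint n :=
  ⟨{i1, i2}, groups.image (fun g => g.image (fun bb => pat2 i1 i2 bb.1 bb.2))⟩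

/-- The clock constraint at position `t`: acts on clock bits `t, t+1` with
allowed collection `{{00},{10},{11}}`. -/
def clockC (p a q T : ℕ) (t : Fin (T - 1)) : SetConstraint (T + (p + a + q)) :=
  let i1 : Fin (T + (p + a + q)) := ⟨t, by have := t.isLt; omega⟩
  let i2 : Fin (T + (p + a + q)) := ⟨(t : ℕ) + 1, by have := t.isLt; omega⟩
  mk2 i1 i2 {{(false, false)}, {(true, false)}, {(true, true)}}

/-- The auxiliary-bit constraint for auxiliary bit `j`: acts on clock bit `0`
and work bit `p + j`, with allowed collection `{{00},{10},{11}}`. -/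
def auxC (p a q T : ℕ) (hT : 0 < T) (j : Fin a) : SetConstraint (T + (p + a + q)) :=
  let i1 : Fin (T + (p + a + q)) := ⟨0, by omega⟩
  let i2 : Fin (T + (p + a + q)) := ⟨T + (p + j), by have := j.isLt; omega⟩
  mk2 i1 i2 {{(false, false)}, {(true, false)}, {(true, true)}}

/-- The randomness constraint for random bit `j`: acts on clock bit `0` and
work bit `p + a + j`, with allowed collection `{{00,01},{10},{11}}`. -/
def randC (p a q T : ℕ) (hT : 0 < T) (j : Fin q) : SetConstraint (T + (p + a + q)) :=
  let i1 : Fin (T + (p + a + q)) := ⟨0, by omega⟩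
  let i2 : Fin (T + (p + a + q)) := ⟨T + (p + a + j), by have := j.isLt; omega⟩
  mk2 i1 i2 {{(false, false), (false, true)}, {(true, false)}, {(true, true)}}

/-- The propagation constraint for the `(t+1)`-st gate (`t : Fin T` zero-based):
acts on the clock bits among `{t−1, t, t+1}` that exist and on the bits of the
gate, with allowed collection `⋃_z {{100 ‖ z, 110 ‖ G(z)}}` (the clock pattern
being shortened at the ends). -/
def propC (p a q T : ℕ) (Gs : Fin T → Gate (p + a + q)) (t : Fin T) :
    SetConstraint (T + (p + a + q)) :=
  let J : Finset (Fin (T + (p + a + q))) :=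
    (Finset.univ.filter fun i : Fin (T + (p + a + q)) =>
        (i : ℕ) < T ∧ (t : ℕ) - 1 ≤ (i : ℕ) ∧ (i : ℕ) ≤ (t : ℕ) + 1)
      ∪ (Gs t).support.image (Fin.natAdd T)
  ⟨J, Finset.image
      (fun z : Fin (p + a + q) → Bool =>
        ({restr J (snapshot p a q T t z),
          restr J (snapshot p a q T ((t : ℕ) + 1) ((Gs t).apply z))} : Finset _))
      Finset.univ⟩

/-- The output constraint: acts on clock bit `T − 1` and the output bit (work
bit `0`), with allowed collection `{{00},{01},{11}}`. -/
def outC (p a q T : ℕ) (hT : 0 < T) (hw : 0 < p + a + q) :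
    SetConstraint (T + (p + a + q)) :=
  let i1 : Fin (T + (p + a + q)) := ⟨T - 1, by omega⟩
  let i2 : Fin (T + (p + a + q)) := ⟨T, by omega⟩
  mk2 i1 i2 {{(false, false)}, {(false, true)}, {(true, true)}}

/-- The SetCSP instance `𝒞_x` associated with a reversible circuit: clock,
auxiliary, randomness, propagation and output constraints. -/
def instanceC (p a q T : ℕ) (hT : 0 < T) (hw : 0 < p + a + q)
    (Gs : Fin T → Gate (p + a + q)) : List (SetConstraint (T + (p + a + q))) :=
  ((List.finRange (T - 1)).map (clockC p a q T))
    ++ ((List.finRange a).map (auxC p a q T hT))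
    ++ ((List.finRange q).map (randC p a q T hT))
    ++ ((List.finRange T).map (propC p a q T Gs))
    ++ [outC p a q T hT hw]

/-- The graph `G_𝒞` associated with a list of set-constraints: an edge joins
`x` and `y` whenever they are `C`-neighbors for some constraint `C` of the
list. -/
def constraintGraphL {n : ℕ} (L : List (SetConstraint n)) :
    SimpleGraph (Fin n → Bool) where
  Adj x y := ∃ C ∈ L, C.Neighbors x y
  symm := by
    constructor
    rintro x y ⟨C, hC, hne, hout, Yi, hYi, hx, hy⟩
    exact ⟨C, hC, hne.symm, fun j hj => (hout j hj).symm, Yi, hYi, hy, hx⟩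
  loopless := by
    constructor
    rintro x ⟨C, hC, hne, -⟩
    exact hne rfl

lemma xval (p a q T : ℕ) (y : Fin p → Bool) (r : Fin q → Bool) (i : Fin (T + (p + a + q))) :
    snapshot p a q T 0 (initString p a q y r) i =
      if h : (i : ℕ) < T then false
      else if h2 : (i : ℕ) < T + p then y ⟨(i : ℕ) - T, by omega⟩
      else if h3 : (i : ℕ) < T + p + a then false
      else r ⟨(i : ℕ) - (T + p + a), by have := i.isLt; omega⟩ := by
  unfold snapshot initString
  by_cases h : (i : ℕ) < T
  · simp [h]
  · by_cases h2 : (i : ℕ) < T + p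
    · have hp : (i : ℕ) - T < p := by omega
      simp [h, h2, hp]
    · by_cases h3 : (i : ℕ) < T + p + a
      · have hp : ¬ ((i : ℕ) - T < p) := by omega
        have hpa : (i : ℕ) - T < p + a := by omega
        simp [h, h2, h3, hp, hpa]
      · have hp : ¬ ((i : ℕ) - T < p) := by omega
        have hpa : ¬ ((i : ℕ) - T < p + a) := by omega
        simp [h, h2, h3, hp, hpa]
        congr 1
        simp [Fin.ext_iff]
        omega

lemma X_rand (p a q T : ℕ) (y : Fin p → Bool) (r : Fin q → Bool) (j : Fin q) :
    snapshot p a q T 0 (initString p a q y r)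
      ⟨T + (p + a + (j : ℕ)), by have := j.isLt; omega⟩ = r j := by
  rw [xval]
  have h1 : ¬ (T + (p + a + (j : ℕ)) < T) := by omega
  have h2 : ¬ (T + (p + a + (j : ℕ)) < T + p) := by omega
  have h3 : ¬ (T + (p + a + (j : ℕ)) < T + p + a) := by omega
  rw [dif_neg h1, dif_neg h2, dif_neg h3]
  congr 1
  rw [Fin.ext_iff]
  simp only [Fin.val_mk]
  omega

lemma X_agree_low (p a q T : ℕ) (y : Fin p → Bool) (r r' : Fin q → Bool)
    (i : Fin (T + (p + a + q))) (hi : (i : ℕ) < T + p + a) :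
    snapshot p a q T 0 (initString p a q y r) i =
      snapshot p a q T 0 (initString p a q y r') i := by
  rw [xval, xval]
  split_ifs <;> first | rfl | omega

lemma X_congr (p a q T : ℕ) (y : Fin p → Bool) (r r' : Fin q → Bool)
    (h : ∀ k, r k = r' k) :
    snapshot p a q T 0 (initString p a q y r) =
      snapshot p a q T 0 (initString p a q y r') := by
  rw [show r = r' from funext h]

private theorem hypercube_aux (p a q T : ℕ)
    (hp : 0 < p) (ha : 0 < a) (hq : 0 < q) (hT : 0 < T)
    (Gs : Fin T → Gate (p + a + q)) :
    ∀ (y : Fin p → Bool) (r r' : Fin q → Bool),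
      (constraintGraphL (instanceC p a q T hT (Nat.lt_of_lt_of_le hq (Nat.le_add_left _ _)) Gs)).Adj
          (snapshot p a q T 0 (initString p a q y r))
          (snapshot p a q T 0 (initString p a q y r'))
        ↔ ∃! i : Fin q, r i ≠ r' i := by
  intro y r r'
  constructor
  · rintro ⟨C, hC, hne, hout, Yi, hYi, hresx, hresy⟩
    simp only [instanceC, List.mem_append, List.mem_map, List.mem_finRange, true_and,
      List.mem_singleton] at hC
    rcases hC with ((((⟨t, rfl⟩ | ⟨j, rfl⟩) | ⟨j, rfl⟩) | ⟨t, rfl⟩) | rfl)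
    · -- clock constraint: impossible
      exfalso; apply hne; funext i
      by_cases hi : i ∈ (clockC p a q T t).J
      · refine X_agree_low p a q T y r r' i ?_
        have ht := t.isLt
        simp only [clockC, mk2, Finset.mem_insert, Finset.mem_singleton] at hi
        rcases hi with rfl | rfl <;> simp <;> omega
      · exact hout i hi
    · -- aux constraint: impossible
      exfalso; apply hne; funext i
      by_cases hi : i ∈ (auxC p a q T hT j).J
      · refine X_agree_low p a q T y r r' i ?_
        have hj := j.isLt
        simp only [auxC, mk2, Finset.mem_insert, Finset.mem_singleton] at hi
        rcases hi with rfl | rfl <;> simp <;> omega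
      · exact hout i hi
    · -- randomness constraint
      have hagree : ∀ k : Fin q, k ≠ j → r k = r' k := by
        intro k hk
        have hkj : (k : ℕ) ≠ (j : ℕ) := fun h => hk (Fin.ext h)
        have hmem : (⟨T + (p + a + (k : ℕ)), by have := k.isLt; omega⟩ :
            Fin (T + (p + a + q))) ∉ (randC p a q T hT j).J := by
          simp only [randC, mk2, Finset.mem_insert, Finset.mem_singleton, Fin.ext_iff,
            Fin.val_mk, not_or]
          omega
        have := hout _ hmem
        rwa [X_rand, X_rand] at this
      have hj : r j ≠ r' j := by
        intro h
        apply hne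
        refine X_congr p a q T y r r' (fun k => ?_)
        by_cases hkj : k = j
        · rw [hkj]; exact h
        · exact hagree k hkj
      exact ⟨j, hj, fun k hk => by_contra fun hkj => hk (hagree k hkj)⟩
    · -- propagation constraint: impossible
      have htT := t.isLt
      have hptJ : (⟨(t : ℕ), by omega⟩ : Fin (T + (p + a + q))) ∈ (propC p a q T Gs t).J := by
        simp only [propC]
        exact Finset.mem_union_left _
          (Finset.mem_filter.2 ⟨Finset.mem_univ _, t.isLt,
            by simp only [Fin.val_mk]; omega, by simp only [Fin.val_mk]; omega⟩)
      obtain ⟨z, -, hz⟩ := (Finset.mem_image (f := fun z : Fin (p + a + q) → Bool =>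
        ({restr (propC p a q T Gs t).J (snapshot p a q T t z),
          restr (propC p a q T Gs t).J (snapshot p a q T ((t : ℕ) + 1) ((Gs t).apply z))} :
          Finset _))).1 hYi
      subst hz
      rw [Finset.mem_insert, Finset.mem_singleton] at hresx hresy
      have hsnap1 : ∀ z' : Fin (p + a + q) → Bool,
          restr (propC p a q T Gs t).J (snapshot p a q T ((t : ℕ) + 1) z')
            ⟨⟨(t : ℕ), by omega⟩, hptJ⟩ = true := by
        intro z'
        show snapshot p a q T ((t : ℕ) + 1) z' ⟨(t : ℕ), by omega⟩ = true
        unfold snapshot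
        rw [dif_pos (show ((⟨(t : ℕ), by omega⟩ : Fin (T + (p + a + q))) : ℕ) < T from htT)]
        simp
      have hxpt : ∀ rr : Fin q → Bool,
          (propC p a q T Gs t).res (snapshot p a q T 0 (initString p a q y rr))
            ⟨⟨(t : ℕ), by omega⟩, hptJ⟩ = false := by
        intro rr
        show snapshot p a q T 0 (initString p a q y rr) ⟨(t : ℕ), by omega⟩ = false
        rw [xval, dif_pos (show ((t : ℕ) : ℕ) < T from htT)]
      have he1 : (propC p a q T Gs t).res (snapshot p a q T 0 (initString p a q y r)) =
          restr (propC p a q T Gs t).J (snapshot p a q T (t : ℕ) z) := by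
        rcases hresx with h | h
        · exact h
        · exfalso
          have h2 := congrFun h ⟨⟨(t : ℕ), by omega⟩, hptJ⟩
          exact Bool.false_ne_true (((hxpt r).symm.trans h2).trans (hsnap1 _))
      have he1' : (propC p a q T Gs t).res (snapshot p a q T 0 (initString p a q y r')) =
          restr (propC p a q T Gs t).J (snapshot p a q T (t : ℕ) z) := by
        rcases hresy with h | h
        · exact h
        · exfalso
          have h2 := congrFun h ⟨⟨(t : ℕ), by omega⟩, hptJ⟩
          exact Bool.false_ne_true (((hxpt r').symm.trans h2).trans (hsnap1 _))
      exfalso; apply hne; funext i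
      by_cases hi : i ∈ (propC p a q T Gs t).J
      · exact congrFun (he1.trans he1'.symm) ⟨i, hi⟩
      · exact hout i hi
    · -- output constraint: impossible
      exfalso; apply hne; funext i
      by_cases hi : i ∈ (outC p a q T hT (by omega)).J
      · refine X_agree_low p a q T y r r' i ?_
        simp only [outC, mk2, Finset.mem_insert, Finset.mem_singleton] at hi
        rcases hi with rfl | rfl <;> simp <;> omega
      · exact hout i hi
  · rintro ⟨j, hj, huniq⟩
    refine ⟨randC p a q T hT j, ?_, ?_, ?_, ?_⟩
    · -- membership in the instance
      simp only [instanceC, List.mem_append]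
      exact Or.inl (Or.inl (Or.inr (List.mem_map.2 ⟨j, List.mem_finRange j, rfl⟩)))
    · -- x ≠ x'
      intro h
      apply hj
      have := congrFun h ⟨T + (p + a + (j : ℕ)), by have := j.isLt; omega⟩
      rwa [X_rand, X_rand] at this
    · -- agreement outside J
      intro i hi
      by_cases hlow : (i : ℕ) < T + p + a
      · exact X_agree_low p a q T y r r' i hlow
      · have hiq := i.isLt
        set k : Fin q := ⟨(i : ℕ) - (T + p + a), by omega⟩ with hk
        have hkj : k ≠ j := by
          intro h
          apply hi
          simp only [randC, mk2, Finset.mem_insert, Finset.mem_singleton]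
          right
          refine Fin.ext ?_
          have : (k : ℕ) = (j : ℕ) := by rw [h]
          simp only [hk, Fin.val_mk] at this
          simp only [Fin.val_mk]
          omega
        have hr : r k = r' k := by_contra fun h => hkj (huniq k h)
        rw [xval, xval]
        have h1 : ¬ ((i : ℕ) < T) := by omega
        have h2 : ¬ ((i : ℕ) < T + p) := by omega
        have h3 : ¬ ((i : ℕ) < T + p + a) := by omega
        rw [dif_neg h1, dif_neg h2, dif_neg h3, dif_neg h1, dif_neg h2, dif_neg h3]
        exact hr
    · -- a common set of the collection
      have hres : ∀ rr : Fin q → Bool,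
          (randC p a q T hT j).res (snapshot p a q T 0 (initString p a q y rr)) =
            pat2 (⟨0, by omega⟩ : Fin (T + (p + a + q)))
              ⟨T + (p + a + (j : ℕ)), by have := j.isLt; omega⟩ false (rr j) := by
        intro rr
        funext i
        obtain ⟨i, hi⟩ := i
        show snapshot p a q T 0 (initString p a q y rr) i = _
        simp only [randC, mk2, Finset.mem_insert, Finset.mem_singleton] at hi
        unfold pat2
        rcases hi with rfl | rfl
        · rw [if_pos rfl, xval, dif_pos (show (0 : ℕ) < T from hT)]
        · rw [if_neg (by simp [Fin.ext_iff]; omega), X_rand]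
      refine ⟨Finset.image
          (fun bb : Bool × Bool =>
            pat2 (⟨0, by omega⟩ : Fin (T + (p + a + q)))
              ⟨T + (p + a + (j : ℕ)), by have := j.isLt; omega⟩ bb.1 bb.2)
          {(false, false), (false, true)}, ?_, ?_, ?_⟩
      · exact Finset.mem_image_of_mem _ (by simp)
      · rw [hres r]
        exact Finset.mem_image.2 ⟨(false, r j), by cases r j <;> simp, rfl⟩
      · rw [hres r']
        exact Finset.mem_image.2 ⟨(false, r' j), by cases r' j <;> simp, rfl⟩

/-- The subgraph of `G_{𝒞_x}` induced on
`R_y = { 0^T ‖ y ‖ 0^a ‖ r : r ∈ {0,1}^q }` is the `q`-dimensional hypercube: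
two vertices of `R_y` are adjacent iff their random registers differ in
exactly one bit. -/
theorem instanceC_restricted_to_Ry_is_hypercube (p a q T : ℕ)
    (hp : 0 < p) (ha : 0 < a) (hq : 0 < q) (hT : 0 < T)
    (Gs : Fin T → Gate (p + a + q)) :
    ∀ (y : Fin p → Bool) (r r' : Fin q → Bool),
      (constraintGraphL (instanceC p a q T hT (by omega) Gs)).Adj
          (snapshot p a q T 0 (initString p a q y r))
          (snapshot p a q T 0 (initString p a q y r'))
        ↔ ∃! i : Fin q, r i ≠ r' i := by
  exact hypercube_aux p a q T hp ha hq hT Gs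
end
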